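/- arXiv:1812.01534 — 3 statements merged into one kernel-verified Lean document; each statement's English description precedes it below -/
import Mathlib

section
/- Let ℋ = (L, H) be a cover of a finite simple graph G. Suppose there is a function ℓ : V(G) → ℤ with ℓ(u) ≥ 3 for all u, such that for all u ∈ V(G): |L(u)| ≥ ℓ(u), and for every c ∈ L(u) and every v ∈ N_G(u), deg*_ℋ(c) ≤ ℓ(v)/8. Then G is ℋ-colourable. -/
open Finset

/-! ### Auxiliary numeric lemmas -/

private lemma aux_one_sub_sum_le_prod {ι : Type*} (s : Finset ι) (f : ι → ℝ)
    (hb : ∀ i ∈ s, 0 ≤ f i ∧ f i ≤ 1) :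
    1 - ∑ i ∈ s, f i ≤ ∏ i ∈ s, (1 - f i) := by
  classical
  induction s using Finset.induction_on with
  | empty => simp
  | @insert a s ha ih =>
    have hfa := hb a (mem_insert_self a s)
    have h' : ∀ i ∈ s, 0 ≤ f i ∧ f i ≤ 1 := fun i hi => hb i (mem_insert_of_mem hi)
    have hs : 0 ≤ ∑ i ∈ s, f i := Finset.sum_nonneg fun i hi => (h' i hi).1
    rw [Finset.prod_insert ha, Finset.sum_insert ha]
    have hih := ih h'
    calc 1 - (f a + ∑ i ∈ s, f i) ≤ (1 - f a) * (1 - ∑ i ∈ s, f i) := by nlinarith [hfa.1, hfa.2]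
    _ ≤ (1 - f a) * ∏ i ∈ s, (1 - f i) := by
        apply mul_le_mul_of_nonneg_left hih (by linarith [hfa.2])

private lemma aux_prod_le_prod_subset {ι : Type*} [DecidableEq ι] {s t : Finset ι} (hst : s ⊆ t)
    (f : ι → ℝ) (hb : ∀ i ∈ t, 0 ≤ f i ∧ f i ≤ 1) :
    ∏ i ∈ t, f i ≤ ∏ i ∈ s, f i := by
  rw [← Finset.prod_sdiff hst]
  have h1 : ∏ i ∈ t \ s, f i ≤ 1 :=
    Finset.prod_le_one (fun i hi => (hb i (mem_sdiff.1 hi).1).1)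
      (fun i hi => (hb i (mem_sdiff.1 hi).1).2)
  have h2 : 0 ≤ ∏ i ∈ s, f i := Finset.prod_nonneg fun i hi => (hb i (hst hi)).1
  exact mul_le_of_le_one_left h2 h1

private lemma aux_prod_union_ge {ι : Type*} [DecidableEq ι] (s t : Finset ι)
    (f : ι → ℝ) (hb : ∀ i ∈ s ∪ t, 0 ≤ f i ∧ f i ≤ 1) :
    (∏ i ∈ s, f i) * ∏ i ∈ t, f i ≤ ∏ i ∈ s ∪ t, f i := by
  have hsub : t \ s ⊆ t := sdiff_subset
  have h1 : ∏ i ∈ t, f i ≤ ∏ i ∈ t \ s, f i :=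
    aux_prod_le_prod_subset hsub f (fun i hi => hb i (mem_union_right s hi))
  have h2 : 0 ≤ ∏ i ∈ s, f i :=
    Finset.prod_nonneg fun i hi => (hb i (mem_union_left t hi)).1
  calc (∏ i ∈ s, f i) * ∏ i ∈ t, f i ≤ (∏ i ∈ s, f i) * ∏ i ∈ t \ s, f i :=
        mul_le_mul_of_nonneg_left h1 h2
  _ = ∏ i ∈ s ∪ (t \ s), f i := (Finset.prod_union (Finset.disjoint_sdiff)).symm
  _ = ∏ i ∈ s ∪ t, f i := by rw [Finset.union_sdiff_self_eq_union]

/-! ### The counting version of the Lovász Local Lemma, for pair events -/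

section LLL

variable {V U : Type*} [Fintype V] [Fintype U] [DecidableEq V] [DecidableEq U]

/-- The set of choice functions `σ` with `σ u ∈ S u` avoiding all pair events in `T`. -/
private def lllGood (S : V → Finset U) (T : Finset ((V × U) × (V × U))) : Finset (V → U) :=
  Finset.univ.filter fun σ =>
    (∀ u, σ u ∈ S u) ∧ ∀ e ∈ T, ¬(σ e.1.1 = e.1.2 ∧ σ e.2.1 = e.2.2)

private lemma mem_lllGood {S : V → Finset U} {T : Finset ((V × U) × (V × U))} {σ : V → U} :
    σ ∈ lllGood S T ↔
      (∀ u, σ u ∈ S u) ∧ ∀ e ∈ T, ¬(σ e.1.1 = e.1.2 ∧ σ e.2.1 = e.2.2) := by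
  simp [lllGood]

private lemma lllGood_mono {S : V → Finset U} {T T' : Finset ((V × U) × (V × U))}
    (h : T ⊆ T') : lllGood S T' ⊆ lllGood S T := by
  intro σ hσ
  rw [mem_lllGood] at hσ ⊢
  exact ⟨hσ.1, fun e he => hσ.2 e (h he)⟩

private lemma lllGood_insert (S : V → Finset U) (T : Finset ((V × U) × (V × U)))
    (e : (V × U) × (V × U)) :
    lllGood S (insert e T)
      = (lllGood S T).filter fun σ => ¬(σ e.1.1 = e.1.2 ∧ σ e.2.1 = e.2.2) := by
  ext σ
  simp only [mem_lllGood, Finset.mem_filter, Finset.mem_insert]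
  constructor
  · rintro ⟨h1, h2⟩
    exact ⟨⟨h1, fun f hf => h2 f (Or.inr hf)⟩, h2 e (Or.inl rfl)⟩
  · rintro ⟨⟨h1, h2⟩, h3⟩
    refine ⟨h1, ?_⟩
    rintro f (rfl | hf)
    · exact h3
    · exact h2 f hf

/-- The key counting identity: if no event of `T` touches the coordinates `u, v`,
then fixing the values at `u` and `v` divides the count by `|S u| * |S v|`. -/
private lemma lll_fix_card (S : V → Finset U) {u v : V} (huv : u ≠ v) {c d : U}
    (hc : c ∈ S u) (hd : d ∈ S v) {T : Finset ((V × U) × (V × U))}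
    (hT : ∀ f ∈ T, f.1.1 ≠ u ∧ f.1.1 ≠ v ∧ f.2.1 ≠ u ∧ f.2.1 ≠ v) :
    ((lllGood S T).filter fun σ => σ u = c ∧ σ v = d).card * ((S u).card * (S v).card)
      = (lllGood S T).card := by
  classical
  have hev : ∀ (σ : V → U) (a b : U) (w : V),
      (Function.update (Function.update σ u a) v b) w
        = if w = v then b else if w = u then a else σ w := by
    intro σ a b w
    by_cases h1 : w = v
    · subst h1; simp
    · rw [Function.update_of_ne h1]
      by_cases h2 : w = u
      · subst h2; simp [h1]
      · rw [Function.update_of_ne h2]; simp [h1, h2]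
  have key : ((((lllGood S T).filter fun σ => σ u = c ∧ σ v = d) ×ˢ (S u ×ˢ S v)).card)
      = (lllGood S T).card := by
    apply Finset.card_nbij'
      (i := fun p => Function.update (Function.update p.1 u p.2.1) v p.2.2)
      (j := fun τ => (Function.update (Function.update τ u c) v d, (τ u, τ v)))
    · rintro ⟨σ, a, b⟩ hp
      simp only [Finset.mem_coe, Finset.mem_product, Finset.mem_filter] at hp
      obtain ⟨⟨hσg, hσu, hσv⟩, ha, hb⟩ := hp
      dsimp only
      rw [mem_lllGood] at hσg; rw [Finset.mem_coe, mem_lllGood]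
      constructor
      · intro w
        rw [hev]
        split_ifs with h1 h2
        · subst h1; exact hb
        · subst h2; exact ha
        · exact hσg.1 w
      · intro f hf
        obtain ⟨n1, n2, n3, n4⟩ := hT f hf
        rw [hev, hev, if_neg n2, if_neg n1, if_neg n4, if_neg n3]
        exact hσg.2 f hf
    · intro τ hτ
      rw [Finset.mem_coe, mem_lllGood] at hτ
      dsimp only
      simp only [Finset.mem_coe, Finset.mem_product, Finset.mem_filter]
      refine ⟨⟨?_, ?_, ?_⟩, hτ.1 u, hτ.1 v⟩
      · rw [mem_lllGood]
        constructor
        · intro w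
          rw [hev]
          split_ifs with h1 h2
          · subst h1; exact hd
          · subst h2; exact hc
          · exact hτ.1 w
        · intro f hf
          obtain ⟨n1, n2, n3, n4⟩ := hT f hf
          rw [hev, hev, if_neg n2, if_neg n1, if_neg n4, if_neg n3]
          exact hτ.2 f hf
      · rw [hev, if_neg huv, if_pos rfl]
      · rw [hev, if_pos rfl]
    · rintro ⟨σ, a, b⟩ hp
      simp only [Finset.mem_coe, Finset.mem_product, Finset.mem_filter] at hp
      obtain ⟨⟨hσg, hσu, hσv⟩, ha, hb⟩ := hp
      dsimp only
      have e1 : (Function.update (Function.update σ u a) v b) u = a := by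
        rw [hev σ a b u, if_neg huv, if_pos rfl]
      have e2 : (Function.update (Function.update σ u a) v b) v = b := by
        rw [hev σ a b v, if_pos rfl]
      refine Prod.ext ?_ (by rw [e1, e2])
      funext w
      show Function.update (Function.update (Function.update (Function.update σ u a) v b) u c)
          v d w = σ w
      rw [hev (Function.update (Function.update σ u a) v b) c d w, hev σ a b w]
      split_ifs with h1 h2
      · subst h1; exact hσv.symm
      · subst h2; exact hσu.symm
      · rfl
    · intro τ hτ
      funext w
      show Function.update (Function.update (Function.update (Function.update τ u c) v d) u (τ u))
          v (τ v) w = τ w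
      rw [hev (Function.update (Function.update τ u c) v d) (τ u) (τ v) w, hev τ c d w]
      split_ifs with h1 h2
      · subst h1; rfl
      · subst h2; rfl
      · rfl
  rw [← key, Finset.card_product, Finset.card_product]

private def lllTouch (e f : (V × U) × (V × U)) : Prop :=
  f.1.1 = e.1.1 ∨ f.1.1 = e.2.1 ∨ f.2.1 = e.1.1 ∨ f.2.1 = e.2.1

private instance (e : (V × U) × (V × U)) : DecidablePred (lllTouch e) := fun _ =>
  inferInstanceAs (Decidable (_ ∨ _ ∨ _ ∨ _))

/-- Main induction of the local lemma: adding one more event to avoid shrinks the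
count of good configurations by a factor at most `1 - x e`. -/
private lemma lll_step (S : V → Finset U) (E : Finset ((V × U) × (V × U)))
    (hE1 : ∀ e ∈ E, e.1.2 ∈ S e.1.1) (hE2 : ∀ e ∈ E, e.2.2 ∈ S e.2.1)
    (hE3 : ∀ e ∈ E, e.1.1 ≠ e.2.1)
    (x : ((V × U) × (V × U)) → ℝ)
    (hx0 : ∀ e ∈ E, 0 ≤ x e) (hx1 : ∀ e ∈ E, x e ≤ 1)
    (hcond : ∀ e ∈ E, 1 ≤ x e *
      (∏ f ∈ (E.filter (lllTouch e)).erase e, (1 - x f)) *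
      (((S e.1.1).card : ℝ) * ((S e.2.1).card : ℝ))) :
    ∀ n : ℕ, ∀ T ⊆ E, T.card ≤ n → ∀ e ∈ E,
      (1 - x e) * ((lllGood S T).card : ℝ) ≤ ((lllGood S (insert e T)).card : ℝ) := by
  classical
  intro n
  induction n using Nat.strong_induction_on with
  | _ n ih =>
  intro T hTE hcard e he
  by_cases heT : e ∈ T
  · rw [Finset.insert_eq_self.mpr heT]
    have h1 := hx0 e he
    have h2 : (0:ℝ) ≤ ((lllGood S T).card : ℝ) := Nat.cast_nonneg _
    nlinarith
  · set T1 : Finset ((V × U) × (V × U)) := T.filter (lllTouch e) with hT1def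
    set T2 : Finset ((V × U) × (V × U)) := T.filter (fun f => ¬ lllTouch e f) with hT2def
    have hT12 : T1 ∪ T2 = T := Finset.filter_union_filter_not_eq _ T
    -- split the count
    have hsplit : (lllGood S T).card
        = ((lllGood S T).filter fun σ => σ e.1.1 = e.1.2 ∧ σ e.2.1 = e.2.2).card
          + (lllGood S (insert e T)).card := by
      rw [lllGood_insert]
      exact (Finset.card_filter_add_card_filter_not
        (p := fun σ : V → U => σ e.1.1 = e.1.2 ∧ σ e.2.1 = e.2.2)).symm
    -- pass to T2
    have hsubT2 : T2 ⊆ T := Finset.filter_subset _ _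
    have hrefine : ((lllGood S T).filter fun σ => σ e.1.1 = e.1.2 ∧ σ e.2.1 = e.2.2).card
        ≤ ((lllGood S T2).filter fun σ => σ e.1.1 = e.1.2 ∧ σ e.2.1 = e.2.2).card :=
      Finset.card_le_card (Finset.filter_subset_filter _ (lllGood_mono hsubT2))
    -- the counting identity on T2
    have hfix : ((lllGood S T2).filter fun σ => σ e.1.1 = e.1.2 ∧ σ e.2.1 = e.2.2).card
          * ((S e.1.1).card * (S e.2.1).card) = (lllGood S T2).card := by
      apply lll_fix_card S (hE3 e he) (hE1 e he) (hE2 e he)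
      intro f hf
      rw [hT2def, Finset.mem_filter] at hf
      have := hf.2
      unfold lllTouch at this
      push_neg at this
      exact this
    -- chain: ∏_{T1} (1 - x f) * N T2 ≤ N T
    have hchain : ∀ T1' ⊆ T1,
        (∏ f ∈ T1', (1 - x f)) * ((lllGood S T2).card : ℝ)
          ≤ ((lllGood S (T2 ∪ T1')).card : ℝ) := by
      intro T1'
      induction T1' using Finset.induction_on with
      | empty => intro _; simp
      | @insert f T1' hf ihf =>
        intro hsub
        have hfT1 : f ∈ T1 := hsub (mem_insert_self f T1')
        have hsub' : T1' ⊆ T1 := fun g hg => hsub (mem_insert_of_mem hg)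
        have hfT : f ∈ T := (Finset.filter_subset _ _) hfT1
        have hfE : f ∈ E := hTE hfT
        have hnotin : f ∉ T2 ∪ T1' := by
          rw [Finset.mem_union]
          rintro (h | h)
          · rw [hT2def, Finset.mem_filter] at h
            rw [hT1def, Finset.mem_filter] at hfT1
            exact h.2 hfT1.2
          · exact hf h
        have hsubT : T2 ∪ T1' ⊆ T := by
          apply Finset.union_subset hsubT2
          exact fun g hg => (Finset.filter_subset _ _) (hsub' hg)
        have hcard' : (T2 ∪ T1').card ≤ n - 1 := by
          have h1 : T2 ∪ T1' ⊆ T.erase f := by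
            rw [Finset.subset_erase]; exact ⟨hsubT, hnotin⟩
          have h2 := Finset.card_le_card h1
          rw [Finset.card_erase_of_mem hfT] at h2
          exact le_trans h2 (Nat.sub_le_sub_right hcard 1)
        have hTpos : 1 ≤ T.card := Finset.card_pos.mpr ⟨f, hfT⟩
        have hnpos : 1 ≤ n := le_trans hTpos hcard
        have hstep := ih (n - 1) (Nat.sub_lt (Nat.lt_of_lt_of_le Nat.zero_lt_one hnpos) Nat.one_pos) (T2 ∪ T1') (hsubT.trans hTE) hcard' f hfE
        rw [Finset.union_insert]
        rw [Finset.prod_insert hf]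
        calc (1 - x f) * (∏ g ∈ T1', (1 - x g)) * ((lllGood S T2).card : ℝ)
            = (1 - x f) * ((∏ g ∈ T1', (1 - x g)) * ((lllGood S T2).card : ℝ)) := by ring
        _ ≤ (1 - x f) * ((lllGood S (T2 ∪ T1')).card : ℝ) := by
            apply mul_le_mul_of_nonneg_left (ihf hsub')
            linarith [hx1 f hfE]
        _ ≤ ((lllGood S (insert f (T2 ∪ T1'))).card : ℝ) := hstep
    have hchainT : (∏ f ∈ T1, (1 - x f)) * ((lllGood S T2).card : ℝ)
        ≤ ((lllGood S T).card : ℝ) := by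
      have := hchain T1 (Finset.Subset.refl T1)
      rwa [Finset.union_comm, hT12] at this
    -- the product over T1 dominates the product in hcond
    have hT1sub : T1 ⊆ (E.filter (lllTouch e)).erase e := by
      intro f hfT1
      rw [Finset.mem_erase]
      rw [hT1def, Finset.mem_filter] at hfT1
      refine ⟨?_, Finset.mem_filter.mpr ⟨hTE hfT1.1, hfT1.2⟩⟩
      rintro rfl; exact heT hfT1.1
    have hbnd : ∀ f ∈ (E.filter (lllTouch e)).erase e, 0 ≤ 1 - x f ∧ 1 - x f ≤ 1 := by
      intro f hf
      have hfE : f ∈ E := Finset.filter_subset _ _ (Finset.erase_subset _ _ hf)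
      constructor
      · linarith [hx1 f hfE]
      · linarith [hx0 f hfE]
    have hprodle : ∏ f ∈ (E.filter (lllTouch e)).erase e, (1 - x f)
        ≤ ∏ f ∈ T1, (1 - x f) :=
      aux_prod_le_prod_subset hT1sub _ hbnd
    have hprodnn : 0 ≤ ∏ f ∈ T1, (1 - x f) :=
      Finset.prod_nonneg fun f hf => (hbnd f (hT1sub hf)).1
    -- combine
    have hxe := hx0 e he
    have hNT2 : (0:ℝ) ≤ ((lllGood S T2).card : ℝ) := Nat.cast_nonneg _
    have hF : (0:ℝ) ≤ (((lllGood S T2).filter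
        fun σ => σ e.1.1 = e.1.2 ∧ σ e.2.1 = e.2.2).card : ℝ) := Nat.cast_nonneg _
    set F : ℝ := (((lllGood S T2).filter
        fun σ => σ e.1.1 = e.1.2 ∧ σ e.2.1 = e.2.2).card : ℝ) with hFdef
    have hfixR : F * (((S e.1.1).card : ℝ) * ((S e.2.1).card : ℝ))
        = ((lllGood S T2).card : ℝ) := by
      rw [hFdef]
      exact_mod_cast congrArg (Nat.cast (R := ℝ)) hfix
    have hcnd := hcond e he
    -- F ≤ x e * ∏_{T1} * N T2
    have hkey : F ≤ x e * (∏ f ∈ T1, (1 - x f)) * ((lllGood S T2).card : ℝ) := by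
      have h1 : 1 ≤ x e * (∏ f ∈ T1, (1 - x f))
          * (((S e.1.1).card : ℝ) * ((S e.2.1).card : ℝ)) := by
        have hs : (0:ℝ) ≤ (((S e.1.1).card : ℝ) * ((S e.2.1).card : ℝ)) := by positivity
        calc (1:ℝ) ≤ x e * (∏ f ∈ (E.filter (lllTouch e)).erase e, (1 - x f))
            * (((S e.1.1).card : ℝ) * ((S e.2.1).card : ℝ)) := hcnd
        _ ≤ x e * (∏ f ∈ T1, (1 - x f))
            * (((S e.1.1).card : ℝ) * ((S e.2.1).card : ℝ)) := by
            apply mul_le_mul_of_nonneg_right _ hs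
            exact mul_le_mul_of_nonneg_left hprodle hxe
      calc F = F * 1 := (mul_one F).symm
      _ ≤ F * (x e * (∏ f ∈ T1, (1 - x f))
          * (((S e.1.1).card : ℝ) * ((S e.2.1).card : ℝ))) :=
          mul_le_mul_of_nonneg_left h1 hF
      _ = x e * (∏ f ∈ T1, (1 - x f))
          * (F * (((S e.1.1).card : ℝ) * ((S e.2.1).card : ℝ))) := by ring
      _ = x e * (∏ f ∈ T1, (1 - x f)) * ((lllGood S T2).card : ℝ) := by rw [hfixR]
    have hkey2 : F ≤ x e * ((lllGood S T).card : ℝ) := by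
      calc F ≤ x e * (∏ f ∈ T1, (1 - x f)) * ((lllGood S T2).card : ℝ) := hkey
      _ = x e * ((∏ f ∈ T1, (1 - x f)) * ((lllGood S T2).card : ℝ)) := by ring
      _ ≤ x e * ((lllGood S T).card : ℝ) := mul_le_mul_of_nonneg_left hchainT hxe
    have hsplitR : ((lllGood S T).card : ℝ)
        = (((lllGood S T).filter fun σ => σ e.1.1 = e.1.2 ∧ σ e.2.1 = e.2.2).card : ℝ)
          + ((lllGood S (insert e T)).card : ℝ) := by
      exact_mod_cast congrArg (Nat.cast (R := ℝ)) hsplit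
    have hrefineR : (((lllGood S T).filter
        fun σ => σ e.1.1 = e.1.2 ∧ σ e.2.1 = e.2.2).card : ℝ) ≤ F := by
      rw [hFdef]
      exact_mod_cast hrefine
    linarith

/-- The Lovász local lemma for pair events over independent uniform choices. -/
private lemma lll_pairs (S : V → Finset U) (hS : ∀ u, (S u).Nonempty)
    (E : Finset ((V × U) × (V × U)))
    (hE1 : ∀ e ∈ E, e.1.2 ∈ S e.1.1) (hE2 : ∀ e ∈ E, e.2.2 ∈ S e.2.1)
    (hE3 : ∀ e ∈ E, e.1.1 ≠ e.2.1)
    (x : ((V × U) × (V × U)) → ℝ)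
    (hx0 : ∀ e ∈ E, 0 ≤ x e) (hx1 : ∀ e ∈ E, x e < 1)
    (hcond : ∀ e ∈ E, 1 ≤ x e *
      (∏ f ∈ (E.filter (lllTouch e)).erase e, (1 - x f)) *
      (((S e.1.1).card : ℝ) * ((S e.2.1).card : ℝ))) :
    ∃ σ : V → U, (∀ u, σ u ∈ S u) ∧
      ∀ e ∈ E, ¬(σ e.1.1 = e.1.2 ∧ σ e.2.1 = e.2.2) := by
  classical
  have main := lll_step S E hE1 hE2 hE3 x hx0 (fun e he => (hx1 e he).le) hcond
  have hchain : ∀ T ⊆ E,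
      (∏ f ∈ T, (1 - x f)) * ((lllGood S ∅).card : ℝ) ≤ ((lllGood S T).card : ℝ) := by
    intro T
    induction T using Finset.induction_on with
    | empty => intro _; simp
    | @insert f T hf ihf =>
      intro hsub
      have hfE : f ∈ E := hsub (mem_insert_self f T)
      have hsub' : T ⊆ E := fun g hg => hsub (mem_insert_of_mem hg)
      rw [Finset.prod_insert hf]
      calc (1 - x f) * (∏ g ∈ T, (1 - x g)) * ((lllGood S ∅).card : ℝ)
          = (1 - x f) * ((∏ g ∈ T, (1 - x g)) * ((lllGood S ∅).card : ℝ)) := by ring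
      _ ≤ (1 - x f) * ((lllGood S T).card : ℝ) := by
          apply mul_le_mul_of_nonneg_left (ihf hsub')
          linarith [hx1 f hfE]
      _ ≤ ((lllGood S (insert f T)).card : ℝ) :=
          main E.card T hsub' (Finset.card_le_card hsub') f hfE
  have hΩ : 0 < (lllGood S ∅).card := by
    apply Finset.card_pos.mpr
    refine ⟨fun u => (hS u).choose, ?_⟩
    rw [mem_lllGood]
    exact ⟨fun u => (hS u).choose_spec, fun e he => absurd he (Finset.notMem_empty e)⟩
  have hprod : 0 < ∏ f ∈ E, (1 - x f) :=
    Finset.prod_pos fun f hf => by linarith [hx1 f hf]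
  have hpos : (0:ℝ) < ((lllGood S E).card : ℝ) := by
    have h1 : (0:ℝ) < (∏ f ∈ E, (1 - x f)) * ((lllGood S ∅).card : ℝ) := by
      apply mul_pos hprod
      exact_mod_cast hΩ
    exact lt_of_lt_of_le h1 (hchain E (Finset.Subset.refl E))
  have : (lllGood S E).Nonempty := Finset.card_pos.mp (by exact_mod_cast hpos)
  obtain ⟨σ, hσ⟩ := this
  rw [mem_lllGood] at hσ
  exact ⟨σ, hσ.1, hσ.2⟩

end LLL

/-- A finite set of vertices is independent in `G`. -/
def IndepFinset {V : Type*} (G : SimpleGraph V) (s : Finset V) : Prop :=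
  ∀ u ∈ s, ∀ v ∈ s, ¬ G.Adj u v

instance {V : Type*} (G : SimpleGraph V) [DecidableRel G.Adj] (s : Finset V) :
    Decidable (IndepFinset G s) :=
  inferInstanceAs (Decidable (∀ u ∈ s, ∀ v ∈ s, ¬ G.Adj u v))

/-- `(L, H)` is a cover of the graph `G` (in the sense of correspondence/DP-colouring):
(1) the sets `L u` partition the vertices of `H`; (2) each `L u` induces a complete
subgraph of `H`; (3) edges of `H` only join colours of a vertex or of adjacent vertices
of `G`; (4) for adjacent `u v`, the edges of `H` between `L u` and `L v` form a matching. -/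
def IsCover {V U : Type*} (G : SimpleGraph V) (H : SimpleGraph U) (L : V → Finset U) :
    Prop :=
  (∀ c : U, ∃! u : V, c ∈ L u) ∧
  (∀ u : V, ∀ c ∈ L u, ∀ d ∈ L u, c ≠ d → H.Adj c d) ∧
  (∀ c d : U, H.Adj c d → ∀ u v : V, c ∈ L u → d ∈ L v → u = v ∨ G.Adj u v) ∧
  (∀ u v : V, G.Adj u v →
    ∀ c ∈ L u, ∀ d ∈ L v, ∀ d' ∈ L v, H.Adj c d → H.Adj c d' → d = d')

/-- The degree `deg*_ℋ(c)` of a colour `c` in the cross-edge subgraph `H*` of the cover: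
the number of `H`-neighbours of `c` lying in a part different from that of `c`. -/
def degStar {V U : Type*} [Fintype V] [Fintype U] [DecidableEq U]
    (H : SimpleGraph U) [DecidableRel H.Adj] (L : V → Finset U) (c : U) : ℕ :=
  (Finset.univ.filter fun d : U => H.Adj c d ∧ ∀ u : V, c ∈ L u → d ∉ L u).card

/-- Lemma 6 of the paper (the local "finishing blow" for correspondence colouring):
if `ℓ : V(G) → ℤ` satisfies `ℓ(u) ≥ 3`, `|L(u)| ≥ ℓ(u)` and
`deg*_ℋ(c) ≤ ℓ(v)/8` for every `c ∈ L(u)` and every neighbour `v` of `u`, then `G` is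
`ℋ`-colourable, i.e. `H` has an independent set of size `|V(G)|`. -/
theorem finishing_blow {V U : Type*} [Fintype V] [Fintype U] [DecidableEq U]
    (G : SimpleGraph V) [DecidableRel G.Adj] (H : SimpleGraph U) [DecidableRel H.Adj]
    (L : V → Finset U) (hcov : IsCover G H L) (ℓ : V → ℤ)
    (h3 : ∀ u : V, 3 ≤ ℓ u)
    (hsize : ∀ u : V, ℓ u ≤ ((L u).card : ℤ))
    (hdeg : ∀ u : V, ∀ c ∈ L u, ∀ v ∈ G.neighborFinset u,
      (degStar H L c : ℝ) ≤ (ℓ v : ℝ) / 8) :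
    ∃ I : Finset U, IndepFinset H I ∧ I.card = Fintype.card V := by
  classical
  -- integer list sizes
  set n : V → ℕ := fun u => (ℓ u).toNat with hndef
  have hcast : ∀ u, ((n u : ℤ)) = ℓ u := fun u => Int.toNat_of_nonneg (by linarith [h3 u])
  have hn3 : ∀ u, 3 ≤ n u := by
    intro u; have h := h3 u; have h' := hcast u; omega
  have hnpos : ∀ u, 0 < n u := fun u => lt_of_lt_of_le (by norm_num) (hn3 u)
  have hncastR : ∀ u, ((n u : ℝ)) = ((ℓ u : ℤ) : ℝ) := by
    intro u; exact_mod_cast hcast u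
  have hnR : ∀ u, (3:ℝ) ≤ (n u : ℝ) := fun u => by exact_mod_cast hn3 u
  have hnL : ∀ u, n u ≤ (L u).card := by
    intro u; have h := hsize u; have h' := hcast u; omega
  choose S hSL hScard using fun u => Finset.exists_subset_card_eq (hnL u)
  have hSne : ∀ u, (S u).Nonempty := fun u =>
    Finset.card_pos.mp (by rw [hScard]; exact hnpos u)
  -- each colour lies in a unique part
  have hpart : ∀ (a : U) (p q : V), a ∈ L p → a ∈ L q → p = q := by
    intro a p q hp hq
    obtain ⟨r, _, hruniq⟩ := hcov.1 a
    exact (hruniq p hp).trans (hruniq q hq).symm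
  -- rank
  set rk : V → ℕ := fun u => ((Fintype.equivFin V) u : ℕ) with hrkdef
  have hrkinj : ∀ {a b : V}, rk a = rk b → a = b := by
    intro a b h
    exact (Fintype.equivFin V).injective (Fin.val_injective h)
  -- the edge events
  set E : Finset ((V × U) × (V × U)) := Finset.univ.filter
    (fun e => e.1.2 ∈ S e.1.1 ∧ e.2.2 ∈ S e.2.1 ∧ rk e.1.1 < rk e.2.1 ∧ H.Adj e.1.2 e.2.2)
    with hEdef
  have hEmem : ∀ e : (V × U) × (V × U), e ∈ E ↔
      (e.1.2 ∈ S e.1.1 ∧ e.2.2 ∈ S e.2.1 ∧ rk e.1.1 < rk e.2.1 ∧ H.Adj e.1.2 e.2.2) := by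
    intro e; rw [hEdef]; simp
  set x : ((V × U) × (V × U)) → ℝ := fun e => 2 / ((n e.1.1 : ℝ) * (n e.2.1)) with hxdef
  have hx0 : ∀ e ∈ E, 0 ≤ x e := by
    intro e _
    simp only [hxdef]
    have h1 := hnR e.1.1; have h2 := hnR e.2.1
    positivity
  have hx1 : ∀ e ∈ E, x e < 1 := by
    intro e _
    simp only [hxdef]
    have h1 := hnR e.1.1; have h2 := hnR e.2.1
    rw [div_lt_one (by nlinarith)]
    nlinarith
  have hxB : ∀ f ∈ E, 0 ≤ 1 - x f ∧ 1 - x f ≤ 1 := by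
    intro f hf
    constructor
    · linarith [hx1 f hf]
    · linarith [hx0 f hf]
  -- key bound : the product over all events touching a fixed vertex is at least 3/4
  have hkeyw : ∀ w : V,
      (3:ℝ)/4 ≤ ∏ f ∈ E.filter (fun f => f.1.1 = w ∨ f.2.1 = w), (1 - x f) := by
    intro w
    have hnw0 : (n w : ℝ) ≠ 0 := by have := hnR w; linarith
    have hmaps : ∀ f ∈ E.filter (fun f => f.1.1 = w ∨ f.2.1 = w),
        (if f.1.1 = w then f.1.2 else f.2.2) ∈ S w := by
      intro f hf
      rw [Finset.mem_filter] at hf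
      obtain ⟨hfE, hside⟩ := hf
      rw [hEmem] at hfE
      by_cases h : f.1.1 = w
      · rw [if_pos h, ← h]; exact hfE.1
      · rw [if_neg h]
        rcases hside with h' | h'
        · exact absurd h' h
        · rw [← h']; exact hfE.2.1
    rw [← Finset.prod_fiberwise_of_maps_to hmaps (fun f => 1 - x f)]
    have hfiber : ∀ c' ∈ S w,
        1 - 1/(4 * (n w : ℝ)) ≤ ∏ f ∈ (E.filter (fun f => f.1.1 = w ∨ f.2.1 = w)).filter
          (fun f => (if f.1.1 = w then f.1.2 else f.2.2) = c'), (1 - x f) := by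
      intro c' hc'
      set Fib := (E.filter (fun f => f.1.1 = w ∨ f.2.1 = w)).filter
          (fun f => (if f.1.1 = w then f.1.2 else f.2.2) = c') with hFibdef
      set oc : ((V × U) × (V × U)) → U := fun f => if f.1.1 = w then f.2.2 else f.1.2
        with hocdef
      have hFibE : ∀ f ∈ Fib, f ∈ E := by
        intro f hf
        rw [hFibdef, Finset.mem_filter, Finset.mem_filter] at hf
        exact hf.1.1
      -- structure of the members of a fiber
      have hstruct : ∀ f ∈ Fib, ∃ w' : V, w' ≠ w ∧ oc f ∈ S w' ∧ H.Adj c' (oc f) ∧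
          ((f.1.1 = w ∧ f.1.2 = c' ∧ f.2.1 = w' ∧ f.2.2 = oc f ∧ rk w < rk w') ∨
           (f.2.1 = w ∧ f.2.2 = c' ∧ f.1.1 = w' ∧ f.1.2 = oc f ∧ rk w' < rk w)) := by
        intro f hf
        rw [hFibdef, Finset.mem_filter, Finset.mem_filter] at hf
        obtain ⟨⟨hfE, hside⟩, hcol⟩ := hf
        rw [hEmem] at hfE
        obtain ⟨h1, h2, h3', h4⟩ := hfE
        by_cases h : f.1.1 = w
        · rw [if_pos h] at hcol
          have hocf : oc f = f.2.2 := by rw [hocdef]; exact if_pos h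
          refine ⟨f.2.1, ?_, ?_, ?_, Or.inl ⟨h, hcol, rfl, hocf.symm, ?_⟩⟩
          · intro hcontra
            rw [h, hcontra] at h3'
            exact lt_irrefl _ h3'
          · rw [hocf]; exact h2
          · rw [hocf, ← hcol]; exact h4
          · rw [← h]; exact h3'
        · have h' : f.2.1 = w := by
            rcases hside with h'' | h''
            · exact absurd h'' h
            · exact h''
          rw [if_neg h] at hcol
          have hocf : oc f = f.1.2 := by rw [hocdef]; exact if_neg h
          refine ⟨f.1.1, ?_, ?_, ?_, Or.inr ⟨h', hcol, rfl, hocf.symm, ?_⟩⟩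
          · intro hcontra
            rw [h', hcontra] at h3'
            exact lt_irrefl _ h3'
          · rw [hocf]; exact h1
          · rw [hocf, ← hcol]; exact (h4.symm)
          · rw [← h']; exact h3'
      -- (a): other colours are counted by degStar of c'
      have hmemdeg : ∀ f ∈ Fib, oc f ∈ Finset.univ.filter
          (fun d : U => H.Adj c' d ∧ ∀ u' : V, c' ∈ L u' → d ∉ L u') := by
        intro f hf
        obtain ⟨w', hww, hocS, hadj, _⟩ := hstruct f hf
        rw [Finset.mem_filter]
        refine ⟨Finset.mem_univ _, hadj, ?_⟩
        intro u' hu' hcontra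
        have h1 : u' = w := hpart c' u' w hu' (hSL w hc')
        have h2 : u' = w' := hpart (oc f) u' w' hcontra (hSL w' hocS)
        exact hww (h2 ▸ h1 ▸ rfl)
      -- (b): the x-value of each member of the fiber is small
      have hxsmall : ∀ f ∈ Fib,
          x f ≤ 2 / ((n w : ℝ) * (8 * (degStar H L c' : ℝ))) := by
        intro f hf
        obtain ⟨w', hww, hocS, hadj, hcases⟩ := hstruct f hf
        -- w' is a G-neighbour of w
        have hGadj : G.Adj w w' := by
          rcases hcov.2.2.1 c' (oc f) hadj w w' (hSL w hc') (hSL w' hocS) with heq | hG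
          · exact absurd heq.symm hww
          · exact hG
        have hnbr : w' ∈ G.neighborFinset w := (SimpleGraph.mem_neighborFinset G w w').mpr hGadj
        have hdw := hdeg w c' (hSL w hc') w' hnbr
        have hDpos : (1:ℕ) ≤ degStar H L c' := by
          apply Finset.card_pos.mpr
          exact ⟨oc f, hmemdeg f hf⟩
        have hDR : (1:ℝ) ≤ (degStar H L c' : ℝ) := by exact_mod_cast hDpos
        have hnw' : 8 * (degStar H L c' : ℝ) ≤ (n w' : ℝ) := by
          rw [hncastR w']
          linarith
        have hden : (0:ℝ) < (n w : ℝ) * (8 * (degStar H L c' : ℝ)) := by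
          have := hnR w; nlinarith
        rcases hcases with ⟨h11, _, h21, _, _⟩ | ⟨h21, _, h11, _, _⟩
        · have hxf : x f = 2 / ((n w : ℝ) * (n w' : ℝ)) := by
            simp only [hxdef, h11, h21]
          rw [hxf]
          apply div_le_div_of_nonneg_left (by norm_num) hden
          have := hnR w
          nlinarith
        · have hxf : x f = 2 / ((n w : ℝ) * (n w' : ℝ)) := by
            simp only [hxdef, h11, h21]
            ring
          rw [hxf]
          apply div_le_div_of_nonneg_left (by norm_num) hden
          have := hnR w
          nlinarith
      -- (c): oc is injective on the fiber
      have hinjoc : Set.InjOn oc Fib := by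
        intro f hf g hg hfg
        obtain ⟨wf, hwfw, hocSf, _, hcf⟩ := hstruct f hf
        obtain ⟨wg, hwgw, hocSg, _, hcg⟩ := hstruct g hg
        have hwfg : wf = wg := by
          apply hpart (oc f) wf wg (hSL wf hocSf)
          rw [hfg]; exact hSL wg hocSg
        rcases hcf with ⟨f11, f12, f21, f22, frk⟩ | ⟨f21, f22, f11, f12, frk⟩ <;>
          rcases hcg with ⟨g11, g12, g21, g22, grk⟩ | ⟨g21, g22, g11, g12, grk⟩
        · apply Prod.ext
          · apply Prod.ext
            · rw [f11, g11]
            · rw [f12, g12]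
          · apply Prod.ext
            · rw [f21, g21, hwfg]
            · rw [f22, g22, hfg]
        · exfalso; rw [hwfg] at frk; exact lt_asymm frk grk
        · exfalso; rw [hwfg] at frk; exact lt_asymm frk grk
        · apply Prod.ext
          · apply Prod.ext
            · rw [f11, g11, hwfg]
            · rw [f12, g12, hfg]
          · apply Prod.ext
            · rw [f21, g21]
            · rw [f22, g22]
      have hcardFib : Fib.card ≤ degStar H L c' := by
        unfold degStar
        exact Finset.card_le_card_of_injOn oc hmemdeg hinjoc
      -- the sum of the x-values over the fiber is at most 1/(4 n w)
      have hsum : ∑ f ∈ Fib, x f ≤ 1/(4 * (n w : ℝ)) := by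
        rcases Finset.eq_empty_or_nonempty Fib with hFib | ⟨f0, hf0⟩
        · rw [hFib]
          simp only [Finset.sum_empty]
          have := hnR w
          positivity
        · have hDpos : (1:ℕ) ≤ degStar H L c' :=
            Finset.card_pos.mpr ⟨oc f0, hmemdeg f0 hf0⟩
          have hDR : (1:ℝ) ≤ (degStar H L c' : ℝ) := by exact_mod_cast hDpos
          have h1 : ∑ f ∈ Fib, x f
              ≤ Fib.card • (2 / ((n w : ℝ) * (8 * (degStar H L c' : ℝ)))) :=
            Finset.sum_le_card_nsmul _ _ _ hxsmall
          rw [nsmul_eq_mul] at h1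
          have h2 : (Fib.card : ℝ) ≤ (degStar H L c' : ℝ) := by exact_mod_cast hcardFib
          have h3 : (degStar H L c' : ℝ) * (2 / ((n w : ℝ) * (8 * (degStar H L c' : ℝ))))
              = 1/(4 * (n w : ℝ)) := by
            have hD0 : (degStar H L c' : ℝ) ≠ 0 := by linarith
            field_simp
            ring
          have h4 : (0:ℝ) ≤ 2 / ((n w : ℝ) * (8 * (degStar H L c' : ℝ))) := by
            have := hnR w
            positivity
          calc ∑ f ∈ Fib, x f
              ≤ (Fib.card : ℝ) * (2 / ((n w : ℝ) * (8 * (degStar H L c' : ℝ)))) := h1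
          _ ≤ (degStar H L c' : ℝ) * (2 / ((n w : ℝ) * (8 * (degStar H L c' : ℝ)))) :=
              mul_le_mul_of_nonneg_right h2 h4
          _ = 1/(4 * (n w : ℝ)) := h3
      -- finish the fiber bound
      have hb : ∀ f ∈ Fib, 0 ≤ x f ∧ x f ≤ 1 := by
        intro f hf
        exact ⟨hx0 f (hFibE f hf), (hx1 f (hFibE f hf)).le⟩
      calc 1 - 1/(4 * (n w : ℝ)) ≤ 1 - ∑ f ∈ Fib, x f := by linarith
      _ ≤ ∏ f ∈ Fib, (1 - x f) := aux_one_sub_sum_le_prod Fib x hb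
    -- multiply the fiber bounds
    have hconstnn : (0:ℝ) ≤ 1 - 1/(4 * (n w : ℝ)) := by
      have h1 := hnR w
      have h2 : 1/(4 * (n w : ℝ)) ≤ 1/12 := by
        apply div_le_div_of_nonneg_left (by norm_num) (by norm_num)
        linarith
      linarith
    calc (3:ℝ)/4 = 1 + (n w : ℝ) * (-(1/(4 * (n w : ℝ)))) := by
          field_simp
          ring
    _ ≤ (1 + (-(1/(4 * (n w : ℝ)))))^(n w) := by
        apply one_add_mul_le_pow
        have h1 := hnR w
        have h2 : 1/(4 * (n w : ℝ)) ≤ 1/12 := by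
          apply div_le_div_of_nonneg_left (by norm_num) (by norm_num)
          linarith
        linarith
    _ = (1 - 1/(4 * (n w : ℝ)))^(n w) := by rw [← sub_eq_add_neg]
    _ = ∏ _c' ∈ S w, (1 - 1/(4 * (n w : ℝ))) := by rw [Finset.prod_const, hScard w]
    _ ≤ ∏ c' ∈ S w, ∏ f ∈ (E.filter (fun f => f.1.1 = w ∨ f.2.1 = w)).filter
          (fun f => (if f.1.1 = w then f.1.2 else f.2.2) = c'), (1 - x f) :=
        Finset.prod_le_prod (fun c' _ => hconstnn) hfiber
  -- the LLL condition
  have hcond : ∀ e ∈ E, 1 ≤ x e *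
      (∏ f ∈ (E.filter (lllTouch e)).erase e, (1 - x f)) *
      (((S e.1.1).card : ℝ) * ((S e.2.1).card : ℝ)) := by
    intro e he
    have hsub : (E.filter (lllTouch e)).erase e ⊆
        (E.filter fun f => f.1.1 = e.1.1 ∨ f.2.1 = e.1.1)
          ∪ (E.filter fun f => f.1.1 = e.2.1 ∨ f.2.1 = e.2.1) := by
      intro f hf
      have hf' := Finset.mem_of_mem_erase hf
      rw [Finset.mem_filter] at hf'
      obtain ⟨hfE, htch⟩ := hf'
      unfold lllTouch at htch
      rcases htch with h | h | h | h
      · exact Finset.mem_union.mpr (Or.inl (Finset.mem_filter.mpr ⟨hfE, Or.inl h⟩))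
      · exact Finset.mem_union.mpr (Or.inr (Finset.mem_filter.mpr ⟨hfE, Or.inl h⟩))
      · exact Finset.mem_union.mpr (Or.inl (Finset.mem_filter.mpr ⟨hfE, Or.inr h⟩))
      · exact Finset.mem_union.mpr (Or.inr (Finset.mem_filter.mpr ⟨hfE, Or.inr h⟩))
    have hbU : ∀ f ∈ (E.filter fun f => f.1.1 = e.1.1 ∨ f.2.1 = e.1.1)
          ∪ (E.filter fun f => f.1.1 = e.2.1 ∨ f.2.1 = e.2.1),
        0 ≤ 1 - x f ∧ 1 - x f ≤ 1 := by
      intro f hf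
      have hfE : f ∈ E := by
        rcases Finset.mem_union.mp hf with h | h
        · exact (Finset.mem_filter.mp h).1
        · exact (Finset.mem_filter.mp h).1
      exact hxB f hfE
    have h9 : (9:ℝ)/16 ≤ ∏ f ∈ (E.filter (lllTouch e)).erase e, (1 - x f) := by
      have h1 := hkeyw e.1.1
      have h2 := hkeyw e.2.1
      have hU : (0:ℝ) ≤ ∏ f ∈ (E.filter fun f => f.1.1 = e.1.1 ∨ f.2.1 = e.1.1), (1 - x f) :=
        Finset.prod_nonneg fun f hf => (hbU f (Finset.mem_union_left _ hf)).1
      calc (9:ℝ)/16 = (3/4) * (3/4) := by norm_num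
      _ ≤ (∏ f ∈ (E.filter fun f => f.1.1 = e.1.1 ∨ f.2.1 = e.1.1), (1 - x f))
          * (∏ f ∈ (E.filter fun f => f.1.1 = e.2.1 ∨ f.2.1 = e.2.1), (1 - x f)) := by
          apply mul_le_mul h1 h2 (by norm_num) hU
      _ ≤ ∏ f ∈ (E.filter fun f => f.1.1 = e.1.1 ∨ f.2.1 = e.1.1)
          ∪ (E.filter fun f => f.1.1 = e.2.1 ∨ f.2.1 = e.2.1), (1 - x f) :=
          aux_prod_union_ge _ _ _ hbU
      _ ≤ ∏ f ∈ (E.filter (lllTouch e)).erase e, (1 - x f) := by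
          apply aux_prod_le_prod_subset hsub _ hbU
    have hA : (0:ℝ) < (n e.1.1 : ℝ) * (n e.2.1 : ℝ) := by
      have h1 := hnR e.1.1; have h2 := hnR e.2.1
      nlinarith
    rw [hScard, hScard]
    have hxeval : x e * (∏ f ∈ (E.filter (lllTouch e)).erase e, (1 - x f))
        * ((n e.1.1 : ℝ) * (n e.2.1 : ℝ))
        = 2 * ∏ f ∈ (E.filter (lllTouch e)).erase e, (1 - x f) := by
      simp only [hxdef]
      field_simp
      exact mul_div_cancel_left₀ _ hA.ne'
    rw [hxeval]
    linarith
  -- apply the local lemma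
  obtain ⟨σ, hσS, hσav⟩ := lll_pairs S hSne E
    (fun e he => ((hEmem e).mp he).1)
    (fun e he => ((hEmem e).mp he).2.1)
    (fun e he heq => by
      have := ((hEmem e).mp he).2.2.1
      rw [heq] at this
      exact lt_irrefl _ this)
    x hx0 hx1 hcond
  -- build the independent set
  have hinj : Function.Injective σ := by
    intro a b hab
    exact hpart (σ a) a b (hSL a (hσS a)) (hab ▸ hSL b (hσS b))
  refine ⟨Finset.image σ Finset.univ, ?_, ?_⟩
  · intro a ha b hb hadj
    obtain ⟨p, _, rfl⟩ := Finset.mem_image.mp ha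
    obtain ⟨q, _, rfl⟩ := Finset.mem_image.mp hb
    by_cases hpq : p = q
    · subst hpq
      exact (H.loopless.irrefl _) hadj
    · have hrkne : rk p ≠ rk q := fun h => hpq (hrkinj h)
      rcases lt_or_gt_of_ne hrkne with hlt | hgt
      · apply hσav ((p, σ p), (q, σ q)) _ ⟨rfl, rfl⟩
        rw [hEmem]
        exact ⟨hσS p, hσS q, hlt, hadj⟩
      · apply hσav ((q, σ q), (p, σ p)) _ ⟨rfl, rfl⟩
        rw [hEmem]
        exact ⟨hσS q, hσS p, hgt, hadj.symm⟩
  · rw [Finset.card_image_of_injective _ hinj, Finset.card_univ]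
end

section
/- For every ε > 0 there exists Δ₀ such that for all Δ ≥ Δ₀, every finite triangle-free simple graph G of maximum degree at most Δ admits a fractional colouring w such that w(v) ⊆ [0, (1+ε)·Δ/log Δ) for every v ∈ V(G); in particular the fractional chromatic number of G is at most (1+ε)·Δ/log Δ. -/
namespace FracMolloy
open Finset MeasureTheory

variable {V : Type} [Fintype V] [DecidableEq V] (G : SimpleGraph V) [DecidableRel G.Adj]

/-- independent subsets of `S` -/
def cand (S : Finset V) : Finset (Finset V) := S.powerset.filter (IndepFinset G)

lemma mem_cand {S I : Finset V} : I ∈ cand G S ↔ I ⊆ S ∧ IndepFinset G I := by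
  simp [cand]

noncomputable def Z (lam : ℝ) (S : Finset V) : ℝ := ∑ I ∈ cand G S, lam ^ I.card

noncomputable def occ (lam : ℝ) (S : Finset V) (v : V) : ℝ :=
  ∑ I ∈ (cand G S).filter (fun I => v ∈ I), lam ^ I.card

lemma empty_mem_cand (S : Finset V) : ∅ ∈ cand G S := by
  simp [mem_cand, IndepFinset]

lemma Z_pos {lam : ℝ} (hl : 0 < lam) (S : Finset V) : 0 < Z G lam S := by
  have h1 : (1:ℝ) ≤ Z G lam S := by
    have := Finset.single_le_sum (f := fun I : Finset V => lam ^ I.card)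
      (fun i _ => le_of_lt (pow_pos hl _)) (empty_mem_cand G S)
    simpa [Z] using this
  linarith

lemma occ_nonneg {lam : ℝ} (hl : 0 < lam) (S : Finset V) (v : V) : 0 ≤ occ G lam S v :=
  Finset.sum_nonneg fun i _ => le_of_lt (pow_pos hl _)

lemma singleton_mem_cand {S : Finset V} {v : V} (hv : v ∈ S) : {v} ∈ cand G S := by
  simp [mem_cand, IndepFinset, hv]

lemma occ_pos {lam : ℝ} (hl : 0 < lam) {S : Finset V} {v : V} (hv : v ∈ S) :
    0 < occ G lam S v := by
  have hmem : {v} ∈ (cand G S).filter (fun I => v ∈ I) := by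
    simp [singleton_mem_cand G hv]
  have := Finset.single_le_sum (f := fun I : Finset V => lam ^ I.card)
    (fun i _ => le_of_lt (pow_pos hl _)) hmem
  have h2 : (0:ℝ) < lam ^ ({v} : Finset V).card := pow_pos hl _
  simp only [Finset.card_singleton] at this h2
  simp only [occ]
  linarith

lemma occ_eq_zero {lam : ℝ} {S : Finset V} {v : V} (hv : v ∉ S) : occ G lam S v = 0 := by
  rw [occ, Finset.sum_eq_zero]
  intro I hI
  rw [Finset.mem_filter, mem_cand] at hI
  exact absurd (hI.1.1 hI.2) hv

lemma sum_powerset_pow (x : ℝ) (F : Finset V) :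
    ∑ A ∈ F.powerset, x ^ A.card = (1 + x) ^ F.card := by
  have h := Finset.prod_add (fun _ : V => x) (fun _ : V => 1) F
  simp only [Finset.prod_const, one_pow, mul_one] at h
  rw [add_comm 1 x, ← h]

lemma sum_powerset_mem_pow (x : ℝ) {F : Finset V} {u : V} (hu : u ∈ F) :
    ∑ A ∈ F.powerset.filter (fun A => u ∈ A), x ^ A.card
      = x * (1 + x) ^ (F.card - 1) := by
  have key : ∑ A ∈ F.powerset.filter (fun A => u ∈ A), x ^ A.card
      = ∑ B ∈ (F.erase u).powerset, x ^ (B.card + 1) := by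
    apply Finset.sum_bij' (fun A _ => A.erase u) (fun B _ => insert u B)
    · intro A hA
      rw [Finset.mem_filter] at hA
      exact Finset.insert_erase hA.2
    · intro B hB
      rw [Finset.mem_powerset] at hB
      exact Finset.erase_insert (fun hc => (Finset.mem_erase.mp (hB hc)).1 rfl)
    · intro A hA
      rw [Finset.mem_filter] at hA
      have h1 : A.card = (A.erase u).card + 1 := by
        rw [Finset.card_erase_of_mem hA.2]
        have : 1 ≤ A.card := Finset.card_pos.mpr ⟨u, hA.2⟩
        omega
      rw [h1]
    · intro A hA
      rw [Finset.mem_filter, Finset.mem_powerset] at hA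
      rw [Finset.mem_powerset]
      exact Finset.erase_subset_erase u hA.1
    · intro B hB
      rw [Finset.mem_powerset] at hB
      rw [Finset.mem_filter, Finset.mem_powerset]
      refine ⟨Finset.insert_subset hu ?_, Finset.mem_insert_self u B⟩
      exact hB.trans (Finset.erase_subset u F)
  rw [key]
  have h2 : ∀ B : Finset V, x ^ (B.card + 1) = x * x ^ B.card := fun B => by ring
  calc ∑ B ∈ (F.erase u).powerset, x ^ (B.card + 1)
      = ∑ B ∈ (F.erase u).powerset, x * x ^ B.card := by simp only [h2]
    _ = x * ∑ B ∈ (F.erase u).powerset, x ^ B.card := by rw [Finset.mul_sum]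
    _ = x * (1 + x) ^ (F.card - 1) := by rw [sum_powerset_pow, Finset.card_erase_of_mem hu]

end FracMolloy

namespace FracMolloy
open Finset MeasureTheory
set_option linter.unusedSectionVars false
set_option linter.unusedVariables false

variable {V : Type} [Fintype V] [DecidableEq V] (G : SimpleGraph V) [DecidableRel G.Adj]

section LocalOcc

variable (hG3 : G.CliqueFree 3) {lam beta gam : ℝ} {Δ : ℕ} {S : Finset V} {v : V}

/-- free neighbours of `v` given outside configuration `J` -/
def freeN (S : Finset V) (v : V) (J : Finset V) : Finset V :=
  (G.neighborFinset v ∩ S).filter (fun u => ∀ w ∈ J, ¬ G.Adj u w)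

lemma not_adj_of_triangle_free (hG3 : G.CliqueFree 3) {a b c : V}
    (hab : G.Adj a b) (hac : G.Adj a c) : ¬ G.Adj b c := fun hbc =>
  hG3 {a, b, c} (SimpleGraph.is3Clique_triple_iff.mpr ⟨hab, hac, hbc⟩)

-- the fiber of J under I ↦ I \ N[v], for J an independent subset of S \ N[v]
lemma fiber_eq (hG3 : G.CliqueFree 3) (hv : v ∈ S) {J : Finset V}
    (hJ : J ∈ cand G (S \ insert v (G.neighborFinset v))) :
    (cand G S).filter (fun I => I \ insert v (G.neighborFinset v) = J)
      = insert (insert v J)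
          ((freeN G S v J).powerset.image (fun A => J ∪ A)) := by
  rw [mem_cand] at hJ
  obtain ⟨hJS, hJind⟩ := hJ
  have hJv : v ∉ J := fun h => by simpa using (hJS h)
  have hJN : ∀ w ∈ J, w ∉ insert v (G.neighborFinset v) := fun w hw =>
    (Finset.mem_sdiff.mp (hJS hw)).2
  have hJS' : ∀ w ∈ J, w ∈ S := fun w hw => (Finset.mem_sdiff.mp (hJS hw)).1
  have hvJadj : ∀ w ∈ J, ¬ G.Adj v w := by
    intro w hw hadj
    exact hJN w hw (Finset.mem_insert_of_mem ((G.mem_neighborFinset v w).mpr hadj))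
  ext I
  simp only [Finset.mem_filter, Finset.mem_insert, Finset.mem_image, Finset.mem_powerset,
    mem_cand]
  constructor
  · rintro ⟨⟨hIS, hIind⟩, hfib⟩
    by_cases hvI : v ∈ I
    · left
      have hIN : ∀ u ∈ I, u ∉ G.neighborFinset v := by
        intro u hu hun
        exact hIind v hvI u hu ((G.mem_neighborFinset v u).mp hun)
      have : I \ insert v (G.neighborFinset v) = I.erase v := by
        ext a
        simp only [Finset.mem_sdiff, Finset.mem_insert, Finset.mem_erase]
        constructor
        · rintro ⟨ha, hb⟩; exact ⟨fun h => hb (Or.inl h), ha⟩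
        · rintro ⟨ha, hb⟩
          refine ⟨hb, ?_⟩
          rintro (rfl | hc)
          · exact ha rfl
          · exact hIN a hb hc
      rw [this] at hfib
      rw [← hfib, Finset.insert_erase hvI]
    · right
      refine ⟨I ∩ G.neighborFinset v, ?_, ?_⟩
      · intro u hu
        rw [Finset.mem_inter] at hu
        rw [freeN, Finset.mem_filter, Finset.mem_inter]
        refine ⟨⟨hu.2, hIS hu.1⟩, ?_⟩
        intro w hw
        have hwI : w ∈ I := by
          have := hfib ▸ hw
          exact (Finset.mem_sdiff.mp (hfib ▸ hw : w ∈ I \ _)).1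
        exact hIind u hu.1 w hwI
      · -- I = J ∪ (I ∩ N v)
        rw [← hfib]
        ext a
        simp only [Finset.mem_union, Finset.mem_sdiff, Finset.mem_inter, Finset.mem_insert]
        constructor
        · rintro (⟨ha, _⟩ | ⟨ha, _⟩) <;> exact ha
        · intro ha
          by_cases han : a ∈ G.neighborFinset v
          · right; exact ⟨ha, han⟩
          · left
            refine ⟨ha, ?_⟩
            rintro (rfl | h)
            · exact hvI ha
            · exact han h
  · rintro (rfl | ⟨A, hA, rfl⟩)
    · -- insert v J
      refine ⟨⟨?_, ?_⟩, ?_⟩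
      · exact Finset.insert_subset hv (fun w hw => hJS' w hw)
      · intro a ha b hb hadj
        rw [Finset.mem_insert] at ha hb
        rcases ha with rfl | ha
        · rcases hb with rfl | hb
          · exact G.irrefl hadj
          · exact hvJadj b hb hadj
        · rcases hb with rfl | hb
          · exact hvJadj a ha hadj.symm
          · exact hJind a ha b hb hadj
      · ext a
        simp only [Finset.mem_sdiff, Finset.mem_insert]
        constructor
        · rintro ⟨(rfl | ha), hb⟩
          · exact absurd (Or.inl rfl) hb
          · exact ha
        · intro ha
          refine ⟨Or.inr ha, ?_⟩
          simpa using hJN a ha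
    · -- J ∪ A with A ⊆ freeN
      have hAsub : ∀ u ∈ A, u ∈ G.neighborFinset v ∩ S ∧ ∀ w ∈ J, ¬ G.Adj u w := by
        intro u hu
        have := hA hu
        rw [freeN, Finset.mem_filter] at this
        exact ⟨this.1, this.2⟩
      refine ⟨⟨?_, ?_⟩, ?_⟩
      · intro a ha
        rcases Finset.mem_union.mp ha with h | h
        · exact hJS' a h
        · exact (Finset.mem_inter.mp (hAsub a h).1).2
      · intro a ha b hb hadj
        rcases Finset.mem_union.mp ha with ha' | ha' <;>
          rcases Finset.mem_union.mp hb with hb' | hb'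
        · exact hJind a ha' b hb' hadj
        · exact (hAsub b hb').2 a ha' hadj.symm
        · exact (hAsub a ha').2 b hb' hadj
        · -- both in A ⊆ N(v): triangle-free
          have hav : G.Adj v a := (G.mem_neighborFinset v a).mp
            (Finset.mem_inter.mp (hAsub a ha').1).1
          have hbv : G.Adj v b := (G.mem_neighborFinset v b).mp
            (Finset.mem_inter.mp (hAsub b hb').1).1
          exact not_adj_of_triangle_free G hG3 hav hbv hadj
      · ext a
        simp only [Finset.mem_sdiff, Finset.mem_union, Finset.mem_insert]
        constructor
        · rintro ⟨(ha | ha), hb⟩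
          · exact ha
          · exfalso
            exact hb (Or.inr (Finset.mem_inter.mp (hAsub a ha).1).1)
        · intro ha
          refine ⟨Or.inl ha, by simpa using hJN a ha⟩

end LocalOcc
end FracMolloy

namespace FracMolloy
open Finset MeasureTheory
set_option linter.unusedSectionVars false
set_option linter.unusedVariables false

variable {V : Type} [Fintype V] [DecidableEq V] (G : SimpleGraph V) [DecidableRel G.Adj]

lemma union_inj_on_powerset {J F : Finset V} (hJF : Disjoint J F)
    {A B : Finset V} (hA : A ⊆ F) (hB : B ⊆ F) (h : J ∪ A = J ∪ B) : A = B := by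
  have h1 : (J ∪ A) ∩ F = A := by
    rw [Finset.union_inter_distrib_right, Finset.inter_eq_left.mpr hA,
      (Finset.disjoint_iff_inter_eq_empty.mp hJF), Finset.empty_union]
  have h2 : (J ∪ B) ∩ F = B := by
    rw [Finset.union_inter_distrib_right, Finset.inter_eq_left.mpr hB,
      (Finset.disjoint_iff_inter_eq_empty.mp hJF), Finset.empty_union]
  rw [← h1, ← h2, h]

theorem local_occupancy (hG3 : G.CliqueFree 3) {lam beta gam : ℝ} (hl : 0 < lam)
    (hb : 0 ≤ beta) (hg : 0 ≤ gam) {Δ : ℕ} (hdeg : ∀ v, G.degree v ≤ Δ)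
    (hkey : ∀ f : ℕ, f ≤ Δ →
      lam + (1 + lam) ^ f ≤ beta * lam + gam * (f * (lam * (1 + lam) ^ (f - 1))))
    (S : Finset V) {v : V} (hv : v ∈ S) :
    Z G lam S ≤ beta * occ G lam S v
      + gam * ∑ u ∈ G.neighborFinset v ∩ S, occ G lam S u := by
  classical
  set M : Finset V := insert v (G.neighborFinset v) with hM
  set T : Finset V := S \ M with hT
  set C0 : Finset (Finset V) := cand G T with hC0
  -- the projection maps candidates to C0
  have hmaps : ∀ I ∈ cand G S, I \ M ∈ C0 := by
    intro I hI
    rw [mem_cand] at hI ⊢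
    constructor
    · exact Finset.sdiff_subset_sdiff hI.1 (le_refl M)
    · intro a ha b hb
      exact hI.2 a (Finset.mem_sdiff.mp ha).1 b (Finset.mem_sdiff.mp hb).1
  -- disjointness of J and freeN
  have hJdisj : ∀ J ∈ C0, Disjoint J (freeN G S v J) := by
    intro J hJ
    rw [Finset.disjoint_left]
    intro a haJ haF
    rw [hC0, mem_cand] at hJ
    have := (Finset.mem_sdiff.mp (hJ.1 haJ)).2
    rw [freeN, Finset.mem_filter, Finset.mem_inter] at haF
    exact this (Finset.mem_insert_of_mem haF.1.1)
  have hvJ : ∀ J ∈ C0, v ∉ J := by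
    intro J hJ hvJ
    rw [hC0, mem_cand] at hJ
    exact (Finset.mem_sdiff.mp (hJ.1 hvJ)).2 (Finset.mem_insert_self _ _)
  have hfcard : ∀ J : Finset V, (freeN G S v J).card ≤ Δ := by
    intro J
    calc (freeN G S v J).card ≤ (G.neighborFinset v ∩ S).card :=
          Finset.card_le_card (Finset.filter_subset _ _)
      _ ≤ (G.neighborFinset v).card := Finset.card_le_card Finset.inter_subset_left
      _ = G.degree v := (G.card_neighborFinset_eq_degree v)
      _ ≤ Δ := hdeg v
  -- Z as a fiberwise sum
  have hZ : Z G lam S = ∑ J ∈ C0, ∑ I ∈ (cand G S).filter (fun I => I \ M = J), lam ^ I.card :=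
    (Finset.sum_fiberwise_of_maps_to hmaps _).symm
  -- fiber sums
  have hvnotinJ : ∀ J ∈ C0, v ∉ J := hvJ
  have hinsert_card : ∀ J ∈ C0, (insert v J).card = J.card + 1 := by
    intro J hJ; rw [Finset.card_insert_of_notMem (hvJ J hJ)]
  have hunion_card : ∀ J ∈ C0, ∀ A ⊆ freeN G S v J, (J ∪ A).card = J.card + A.card := by
    intro J hJ A hA
    rw [Finset.card_union_of_disjoint]
    exact Finset.disjoint_of_subset_right hA (hJdisj J hJ)
  have hinsert_notin_image : ∀ J ∈ C0,
      insert v J ∉ (freeN G S v J).powerset.image (fun A => J ∪ A) := by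
    intro J hJ hmem
    rw [Finset.mem_image] at hmem
    obtain ⟨A, hA, hAeq⟩ := hmem
    have hvmem : v ∈ insert v J := Finset.mem_insert_self _ _
    rw [← hAeq] at hvmem
    rcases Finset.mem_union.mp hvmem with h | h
    · exact hvJ J hJ h
    · rw [Finset.mem_powerset] at hA
      have := hA h
      rw [freeN, Finset.mem_filter, Finset.mem_inter, G.mem_neighborFinset] at this
      exact G.irrefl this.1.1
  -- fiber sum of Z
  have hfibZ : ∀ J ∈ C0, ∑ I ∈ (cand G S).filter (fun I => I \ M = J), lam ^ I.card
      = lam ^ J.card * (lam + (1 + lam) ^ (freeN G S v J).card) := by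
    intro J hJ
    rw [fiber_eq G hG3 hv hJ, Finset.sum_insert (hinsert_notin_image J hJ),
      Finset.sum_image (fun A hA B hB h => union_inj_on_powerset (hJdisj J hJ)
        (Finset.mem_powerset.mp hA) (Finset.mem_powerset.mp hB) h)]
    rw [hinsert_card J hJ]
    have : ∀ A ∈ (freeN G S v J).powerset, lam ^ (J ∪ A).card = lam ^ J.card * lam ^ A.card := by
      intro A hA
      rw [hunion_card J hJ A (Finset.mem_powerset.mp hA), pow_add]
    rw [Finset.sum_congr rfl this, ← Finset.mul_sum, sum_powerset_pow]
    ring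
  -- beta-term fiber
  have hmapsB : ∀ I ∈ (cand G S).filter (fun I => v ∈ I), I \ M ∈ C0 :=
    fun I hI => hmaps I (Finset.mem_filter.mp hI).1
  have hoccv : occ G lam S v = ∑ J ∈ C0,
      ∑ I ∈ ((cand G S).filter (fun I => v ∈ I)).filter (fun I => I \ M = J), lam ^ I.card :=
    (Finset.sum_fiberwise_of_maps_to hmapsB _).symm
  have hfibB : ∀ J ∈ C0,
      ∑ I ∈ ((cand G S).filter (fun I => v ∈ I)).filter (fun I => I \ M = J), lam ^ I.card
        = lam ^ J.card * lam := by
    intro J hJ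
    have hset : ((cand G S).filter (fun I => v ∈ I)).filter (fun I => I \ M = J)
        = {insert v J} := by
      have h1 : ((cand G S).filter (fun I => v ∈ I)).filter (fun I => I \ M = J)
          = ((cand G S).filter (fun I => I \ M = J)).filter (fun I => v ∈ I) := by
        rw [Finset.filter_comm]
      rw [h1, fiber_eq G hG3 hv hJ]
      ext I
      simp only [Finset.mem_filter, Finset.mem_insert, Finset.mem_image, Finset.mem_powerset,
        Finset.mem_singleton]
      constructor
      · rintro ⟨rfl | ⟨A, hA, rfl⟩, hvI⟩
        · rfl
        · exfalso
          rcases Finset.mem_union.mp hvI with h | h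
          · exact hvJ J hJ h
          · have := hA h
            rw [freeN, Finset.mem_filter, Finset.mem_inter, G.mem_neighborFinset] at this
            exact G.irrefl this.1.1
      · rintro rfl
        exact ⟨Or.inl rfl, Finset.mem_insert_self _ _⟩
    rw [hset, Finset.sum_singleton, hinsert_card J hJ, pow_succ]
  -- gamma-term fibers
  have hoccu : ∀ u ∈ G.neighborFinset v ∩ S, occ G lam S u = ∑ J ∈ C0,
      ∑ I ∈ ((cand G S).filter (fun I => u ∈ I)).filter (fun I => I \ M = J), lam ^ I.card := by
    intro u hu
    exact (Finset.sum_fiberwise_of_maps_to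
      (fun I hI => hmaps I (Finset.mem_filter.mp hI).1) _).symm
  have hfibC : ∀ J ∈ C0, ∀ u ∈ G.neighborFinset v ∩ S,
      ∑ I ∈ ((cand G S).filter (fun I => u ∈ I)).filter (fun I => I \ M = J), lam ^ I.card
        = if u ∈ freeN G S v J then
            lam ^ J.card * (lam * (1 + lam) ^ ((freeN G S v J).card - 1)) else 0 := by
    intro J hJ u hu
    have huv : u ≠ v := by
      rintro rfl
      exact G.irrefl ((G.mem_neighborFinset u u).mp (Finset.mem_inter.mp hu).1)
    have huJ : u ∉ J := by
      intro huJ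
      rw [hC0, mem_cand] at hJ
      exact (Finset.mem_sdiff.mp (hJ.1 huJ)).2
        (Finset.mem_insert_of_mem (Finset.mem_inter.mp hu).1)
    have hset : ((cand G S).filter (fun I => u ∈ I)).filter (fun I => I \ M = J)
        = ((freeN G S v J).powerset.filter (fun A => u ∈ A)).image (fun A => J ∪ A) := by
      have h1 : ((cand G S).filter (fun I => u ∈ I)).filter (fun I => I \ M = J)
          = ((cand G S).filter (fun I => I \ M = J)).filter (fun I => u ∈ I) := by
        rw [Finset.filter_comm]
      rw [h1, fiber_eq G hG3 hv hJ]
      ext I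
      simp only [Finset.mem_filter, Finset.mem_insert, Finset.mem_image, Finset.mem_powerset]
      constructor
      · rintro ⟨rfl | ⟨A, hA, rfl⟩, huI⟩
        · exfalso
          rcases Finset.mem_insert.mp huI with h | h
          · exact huv h
          · exact huJ h
        · refine ⟨A, ⟨hA, ?_⟩, rfl⟩
          rcases Finset.mem_union.mp huI with h | h
          · exact absurd h huJ
          · exact h
      · rintro ⟨A, ⟨hA, huA⟩, rfl⟩
        exact ⟨Or.inr ⟨A, hA, rfl⟩, Finset.mem_union_right _ huA⟩
    rw [hset, Finset.sum_image]
    · by_cases huF : u ∈ freeN G S v J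
      · rw [if_pos huF]
        have : ∀ A ∈ (freeN G S v J).powerset.filter (fun A => u ∈ A),
            lam ^ (J ∪ A).card = lam ^ J.card * lam ^ A.card := by
          intro A hA
          rw [hunion_card J hJ A (Finset.mem_powerset.mp (Finset.mem_filter.mp hA).1), pow_add]
        rw [Finset.sum_congr rfl this, ← Finset.mul_sum, sum_powerset_mem_pow lam huF]
      · rw [if_neg huF]
        apply Finset.sum_eq_zero
        intro A hA
        exfalso
        rw [Finset.mem_filter, Finset.mem_powerset] at hA
        exact huF (hA.1 hA.2)
    · intro A hA B hB h
      rw [Finset.mem_coe, Finset.mem_filter, Finset.mem_powerset] at hA hB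
      exact union_inj_on_powerset (hJdisj J hJ) hA.1 hB.1 h
  -- collect the gamma sum per fiber
  have hgam : ∑ u ∈ G.neighborFinset v ∩ S, occ G lam S u
      = ∑ J ∈ C0, ((freeN G S v J).card : ℝ) *
          (lam ^ J.card * (lam * (1 + lam) ^ ((freeN G S v J).card - 1))) := by
    rw [Finset.sum_congr rfl hoccu, Finset.sum_comm]
    apply Finset.sum_congr rfl
    intro J hJ
    rw [Finset.sum_congr rfl (hfibC J hJ)]
    rw [Finset.sum_ite_mem]
    have hFsub : (G.neighborFinset v ∩ S) ∩ freeN G S v J = freeN G S v J := by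
      apply Finset.inter_eq_right.mpr
      exact Finset.filter_subset _ _
    rw [hFsub, Finset.sum_const, nsmul_eq_mul]
  -- combine
  rw [hZ, Finset.sum_congr rfl hfibZ, hoccv, Finset.sum_congr rfl hfibB, hgam,
    Finset.mul_sum, Finset.mul_sum, ← Finset.sum_add_distrib]
  apply Finset.sum_le_sum
  intro J hJ
  have hkeyJ := hkey (freeN G S v J).card (hfcard J)
  have hpow : (0:ℝ) ≤ lam ^ J.card := le_of_lt (pow_pos hl _)
  have := mul_le_mul_of_nonneg_left hkeyJ hpow
  calc lam ^ J.card * (lam + (1 + lam) ^ (freeN G S v J).card)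
      ≤ lam ^ J.card * (beta * lam + gam *
          ((freeN G S v J).card * (lam * (1 + lam) ^ ((freeN G S v J).card - 1)))) := this
    _ = beta * (lam ^ J.card * lam) + gam * ((freeN G S v J).card *
          (lam ^ J.card * (lam * (1 + lam) ^ ((freeN G S v J).card - 1)))) := by ring

end FracMolloy

namespace FracMolloy
open Finset MeasureTheory
set_option linter.unusedSectionVars false
set_option linter.unusedVariables false
set_option maxHeartbeats 1000000

variable {V : Type} [Fintype V] [DecidableEq V] (G : SimpleGraph V) [DecidableRel G.Adj]

noncomputable def enc (V : Type) [Fintype V] [DecidableEq V] : Finset V → ℕ :=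
  @Encodable.encode (Finset V) (Fintype.toEncodable _)

lemma enc_inj (V : Type) [Fintype V] [DecidableEq V] : Function.Injective (enc V) :=
  @Encodable.encode_injective (Finset V) (Fintype.toEncodable _)

theorem greedy (hG3 : G.CliqueFree 3) {lam beta gam : ℝ} (hl : 0 < lam)
    (hb : 0 ≤ beta) (hg : 0 ≤ gam) {Δ : ℕ} (hdeg : ∀ v, G.degree v ≤ Δ)
    (hkey : ∀ f : ℕ, f ≤ Δ →
      lam + (1 + lam) ^ f ≤ beta * lam + gam * (f * (lam * (1 + lam) ^ (f - 1)))) :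
    ∀ n : ℕ, ∀ S : Finset V, S.card ≤ n → ∀ d : V → ℝ, (∀ u, 0 ≤ d u) →
      (∀ u, u ∈ S ↔ 0 < d u) →
      ∃ w : Finset V → Set ℝ,
        (∀ I, MeasurableSet (w I)) ∧
        (∀ I, ¬(IndepFinset G I ∧ I ⊆ S) → w I = ∅) ∧
        (∀ I, w I ⊆ Set.Ici 0) ∧
        (∀ I J, I ≠ J → Disjoint (w I) (w J)) ∧
        (∀ u, ENNReal.ofReal (d u) ≤ ∑ I : Finset V,
            if IndepFinset G I ∧ u ∈ I then volume (w I) else 0) ∧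
        (∀ u I, u ∈ I →
          w I ⊆ Set.Ico 0 (beta * d u + gam * ∑ x ∈ G.neighborFinset u, d x)) := by
  intro n
  induction n with
  | zero =>
    intro S hS d hd0 hsupp
    have hSe : S = ∅ := Finset.card_eq_zero.mp (Nat.le_zero.mp hS)
    have hd : ∀ u, d u = 0 := by
      intro u
      by_contra h
      have : 0 < d u := lt_of_le_of_ne (hd0 u) (Ne.symm h)
      have := (hsupp u).mpr this
      rw [hSe] at this
      exact absurd this (Finset.notMem_empty u)
    exact ⟨fun _ => ∅, fun _ => MeasurableSet.empty, fun _ _ => rfl,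
      fun _ => Set.empty_subset _, fun _ _ _ => Set.disjoint_empty _,
      fun u => by simp [hd u], fun u I _ => Set.empty_subset _⟩
  | succ n ih =>
    intro S hS d hd0 hsupp
    by_cases hSe : S = ∅
    · have hd : ∀ u, d u = 0 := by
        intro u
        by_contra h
        have : 0 < d u := lt_of_le_of_ne (hd0 u) (Ne.symm h)
        have := (hsupp u).mpr this
        rw [hSe] at this
        exact absurd this (Finset.notMem_empty u)
      exact ⟨fun _ => ∅, fun _ => MeasurableSet.empty, fun _ _ => rfl,
        fun _ => Set.empty_subset _, fun _ _ _ => Set.disjoint_empty _,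
        fun u => by simp [hd u], fun u I _ => Set.empty_subset _⟩
    have hne : S.Nonempty := Finset.nonempty_iff_ne_empty.mpr hSe
    -- the hard-core marginals
    set p : V → ℝ := fun x => occ G lam S x / Z G lam S with hp
    have hZ : 0 < Z G lam S := Z_pos G hl S
    have hp0 : ∀ x, 0 ≤ p x := fun x => div_nonneg (occ_nonneg G hl S x) (le_of_lt hZ)
    have hppos : ∀ x ∈ S, 0 < p x := fun x hx => div_pos (occ_pos G hl hx) hZ
    have hpz : ∀ x, x ∉ S → p x = 0 := by
      intro x hx
      simp [hp, occ_eq_zero G hx]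
    obtain ⟨a, haS, hmin⟩ := S.exists_min_image (fun x => d x / p x) hne
    set t : ℝ := d a / p a with htdef
    have ht : 0 < t := div_pos ((hsupp a).mp haS) (hppos a haS)
    have htp : ∀ x, t * p x ≤ d x := by
      intro x
      by_cases hx : x ∈ S
      · have h1 : t ≤ d x / p x := hmin x hx
        exact (le_div_iff₀ (hppos x hx)).mp h1
      · rw [hpz x hx, mul_zero]
        exact hd0 x
    -- the residual instance
    set S' : Finset V := S.filter (fun x => t * p x < d x) with hS'
    set d' : V → ℝ := fun x => if t * p x < d x then d x - t * p x else 0 with hd'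
    have hd'0 : ∀ x, 0 ≤ d' x := by
      intro x
      rw [hd']
      dsimp only
      split
      · linarith [htp x]
      · exact le_refl 0
    have hdiff : ∀ x, t * p x ≤ d x - d' x := by
      intro x
      rw [hd']
      dsimp only
      split
      · linarith
      · next h => simpa using htp x
    have hdle : ∀ x, d x ≤ t * p x + d' x := by
      intro x
      rw [hd']
      dsimp only
      split
      · linarith
      · next h => linarith [not_lt.mp h]
    have hsupp' : ∀ x, x ∈ S' ↔ 0 < d' x := by
      intro x
      simp only [hS', Finset.mem_filter, hd']
      constructor
      · rintro ⟨hxS, hlt⟩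
        rw [if_pos hlt]
        linarith
      · intro hpos
        by_cases hlt : t * p x < d x
        · refine ⟨(hsupp x).mpr ?_, hlt⟩
          have := mul_nonneg (le_of_lt ht) (hp0 x)
          linarith
        · rw [if_neg hlt] at hpos
          exact absurd hpos (lt_irrefl 0)
    have haS' : a ∉ S' := by
      rw [hS', Finset.mem_filter]
      rintro ⟨-, hlt⟩
      rw [htdef, div_mul_cancel₀ _ (ne_of_gt (hppos a haS))] at hlt
      exact lt_irrefl _ hlt
    have hcard' : S'.card ≤ n := by
      have h1 : S' ⊆ S.erase a := by
        intro x hx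
        refine Finset.mem_erase.mpr ⟨?_, (Finset.mem_filter.mp hx).1⟩
        rintro rfl
        exact haS' hx
      have h2 := Finset.card_le_card h1
      have h3 := Finset.card_erase_of_mem haS
      have h4 : 1 ≤ S.card := Finset.card_pos.mpr hne
      omega
    obtain ⟨w', hw'meas, hw'empty, hw'nonneg, hw'disj, hw'cov, hw'sub⟩ :=
      ih S' hcard' d' hd'0 hsupp'
    -- the new block of colour
    set wt : Finset V → ℝ :=
      fun I => if I ∈ cand G S then t * (lam ^ I.card / Z G lam S) else 0 with hwt
    have hwt0 : ∀ I, 0 ≤ wt I := by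
      intro I
      rw [hwt]
      dsimp only
      split
      · exact mul_nonneg (le_of_lt ht)
          (div_nonneg (le_of_lt (pow_pos hl _)) (le_of_lt hZ))
      · exact le_refl 0
    set off : Finset V → ℝ :=
      fun I => ∑ J ∈ Finset.univ.filter (fun J : Finset V => enc V J < enc V I), wt J
        with hoff
    have hoff0 : ∀ I, 0 ≤ off I := fun I => Finset.sum_nonneg fun J _ => hwt0 J
    have htot : ∑ J : Finset V, wt J = t := by
      rw [hwt]
      rw [Finset.sum_ite_mem, Finset.univ_inter, ← Finset.mul_sum, ← Finset.sum_div]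
      rw [← Z]
      rw [div_self (ne_of_gt hZ), mul_one]
    have hofflt : ∀ I, off I + wt I ≤ t := by
      intro I
      have hnotmem : I ∉ Finset.univ.filter (fun J : Finset V => enc V J < enc V I) := by
        simp
      have h1 : off I + wt I
          = ∑ J ∈ insert I (Finset.univ.filter (fun J : Finset V => enc V J < enc V I)), wt J := by
        rw [Finset.sum_insert hnotmem, hoff]
        ring
      rw [h1, ← htot]
      exact Finset.sum_le_sum_of_subset_of_nonneg (Finset.subset_univ _)
        (fun J _ _ => hwt0 J)
    have hoffmono : ∀ I J : Finset V, enc V I < enc V J → off I + wt I ≤ off J := by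
      intro I J hIJ
      have hnotmem : I ∉ Finset.univ.filter (fun K : Finset V => enc V K < enc V I) := by
        simp
      have h1 : off I + wt I
          = ∑ K ∈ insert I (Finset.univ.filter (fun K : Finset V => enc V K < enc V I)), wt K := by
        rw [Finset.sum_insert hnotmem, hoff]
        ring
      rw [h1, hoff]
      apply Finset.sum_le_sum_of_subset_of_nonneg
      · intro K hK
        rcases Finset.mem_insert.mp hK with rfl | hK'
        · simp [hIJ]
        · simp only [Finset.mem_filter, Finset.mem_univ, true_and] at hK' ⊢
          exact hK'.trans hIJ
      · exact fun K _ _ => hwt0 K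
    set blk : Finset V → Set ℝ := fun I => Set.Ico (off I) (off I + wt I) with hblk
    set shf : Finset V → Set ℝ := fun I => (fun x : ℝ => x - t) ⁻¹' (w' I) with hshf
    set w : Finset V → Set ℝ := fun I => blk I ∪ shf I with hw
    have hblksub : ∀ I, blk I ⊆ Set.Ico 0 t := by
      intro I x hx
      exact ⟨le_trans (hoff0 I) hx.1, lt_of_lt_of_le hx.2 (hofflt I)⟩
    have hshfsub : ∀ I, shf I ⊆ Set.Ici t := by
      intro I x hx
      have h1 : x - t ∈ w' I := hx
      have h2 := hw'nonneg I h1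
      simp only [Set.mem_Ici] at h2 ⊢
      linarith
    have hbsdisj : ∀ I J, Disjoint (blk I) (shf J) := by
      intro I J
      rw [Set.disjoint_left]
      intro x hxb hxs
      have h1 := (hblksub I hxb).2
      have h2 := hshfsub J hxs
      rw [Set.mem_Ici] at h2
      linarith
    have hmeasshf : ∀ I, MeasurableSet (shf I) :=
      fun I => (measurable_id.sub_const t) (hw'meas I)
    have hmeas : ∀ I, MeasurableSet (w I) :=
      fun I => measurableSet_Ico.union (hmeasshf I)
    have hvolblk : ∀ I, volume (blk I) = ENNReal.ofReal (wt I) := by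
      intro I
      rw [hblk]
      simp [Real.volume_Ico]
    have hvolshf : ∀ I, volume (shf I) = volume (w' I) := by
      intro I
      rw [hshf]
      have heq : (fun x : ℝ => x - t) = (fun x : ℝ => x + (-t)) := by
        funext x
        exact sub_eq_add_neg x t
      simp only [heq]
      exact measure_preimage_add_right volume (-t) (w' I)
    have hvol : ∀ I, volume (w I) = ENNReal.ofReal (wt I) + volume (w' I) := by
      intro I
      rw [hw]
      simp only []
      rw [measure_union (hbsdisj I I) (hmeasshf I), hvolblk I, hvolshf I]
    -- empty on non-candidates
    have hempty : ∀ I, ¬(IndepFinset G I ∧ I ⊆ S) → w I = ∅ := by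
      intro I hI
      have h1 : wt I = 0 := by
        rw [hwt]
        dsimp only
        rw [if_neg]
        rw [mem_cand]
        tauto
      have h2 : w' I = ∅ := by
        apply hw'empty
        rintro ⟨hind, hsub⟩
        exact hI ⟨hind, hsub.trans (Finset.filter_subset _ _)⟩
      rw [hw]
      simp only []
      rw [hblk, hshf]
      simp [h1, h2]
    -- pairwise disjoint
    have hdisj : ∀ I J, I ≠ J → Disjoint (w I) (w J) := by
      intro I J hIJ
      have hblkdisj : Disjoint (blk I) (blk J) := by
        rcases lt_trichotomy (enc V I) (enc V J) with h | h | h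
        · rw [Set.disjoint_left]
          intro x hxI hxJ
          have := hoffmono I J h
          have h1 := hxI.2
          have h2 := hxJ.1
          simp only [hblk, Set.mem_Ico] at hxI hxJ
          linarith [hxI.2, hxJ.1]
        · exact absurd (enc_inj V h) hIJ
        · rw [Set.disjoint_right]
          intro x hxJ hxI
          have := hoffmono J I h
          simp only [hblk, Set.mem_Ico] at hxI hxJ
          linarith [hxJ.2, hxI.1]
      have hshfdisj : Disjoint (shf I) (shf J) := by
        rw [hshf]
        exact Disjoint.preimage _ (hw'disj I J hIJ)
      rw [hw]
      simp only []
      rw [Set.disjoint_union_left]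
      constructor <;> rw [Set.disjoint_union_right]
      · exact ⟨hblkdisj, hbsdisj I J⟩
      · exact ⟨(hbsdisj J I).symm, hshfdisj⟩
    -- coverage
    have hcov : ∀ u, ENNReal.ofReal (d u) ≤ ∑ I : Finset V,
        if IndepFinset G I ∧ u ∈ I then volume (w I) else 0 := by
      intro u
      have hsplit : ∀ I : Finset V, (if IndepFinset G I ∧ u ∈ I then volume (w I) else 0)
          = (if IndepFinset G I ∧ u ∈ I then ENNReal.ofReal (wt I) else 0)
            + (if IndepFinset G I ∧ u ∈ I then volume (w' I) else 0) := by
        intro I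
        by_cases h : IndepFinset G I ∧ u ∈ I
        · rw [if_pos h, if_pos h, if_pos h, hvol I]
        · rw [if_neg h, if_neg h, if_neg h, add_zero]
      rw [Finset.sum_congr rfl (fun I _ => hsplit I), Finset.sum_add_distrib]
      -- first summand
      have h1 : ∑ I : Finset V, (if IndepFinset G I ∧ u ∈ I then ENNReal.ofReal (wt I) else 0)
          = ENNReal.ofReal (t * p u) := by
        have e1 : ∀ I : Finset V, (if IndepFinset G I ∧ u ∈ I then ENNReal.ofReal (wt I) else 0)
            = ENNReal.ofReal (if IndepFinset G I ∧ u ∈ I then wt I else 0) := by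
          intro I
          split <;> simp
        rw [Finset.sum_congr rfl (fun I _ => e1 I),
          ← ENNReal.ofReal_sum_of_nonneg (fun I _ => by positivity)]
        congr 1
        have e2 : ∀ I : Finset V, (if IndepFinset G I ∧ u ∈ I then wt I else 0)
            = (if I ∈ (cand G S).filter (fun I => u ∈ I)
                then t * (lam ^ I.card / Z G lam S) else 0) := by
          intro I
          by_cases hmem : I ∈ (cand G S).filter (fun I => u ∈ I)
          · rw [if_pos hmem]
            rw [Finset.mem_filter] at hmem
            have hc := (mem_cand G).mp hmem.1
            rw [if_pos ⟨hc.2, hmem.2⟩, hwt]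
            dsimp only
            rw [if_pos hmem.1]
          · rw [if_neg hmem]
            by_cases hi : IndepFinset G I ∧ u ∈ I
            · rw [if_pos hi, hwt]
              dsimp only
              rw [if_neg]
              intro hcand
              exact hmem (Finset.mem_filter.mpr ⟨hcand, hi.2⟩)
            · rw [if_neg hi]
        rw [Finset.sum_congr rfl (fun I _ => e2 I), Finset.sum_ite_mem, Finset.univ_inter]
        rw [hp]
        dsimp only
        unfold occ
        rw [Finset.sum_div, Finset.mul_sum]
      rw [h1]
      have h2 : ENNReal.ofReal (d' u) ≤
          ∑ I : Finset V, (if IndepFinset G I ∧ u ∈ I then volume (w' I) else 0) := hw'cov u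
      have h3 : ENNReal.ofReal (d u) ≤ ENNReal.ofReal (t * p u) + ENNReal.ofReal (d' u) := by
        rw [← ENNReal.ofReal_add (mul_nonneg (le_of_lt ht) (hp0 u)) (hd'0 u)]
        exact ENNReal.ofReal_le_ofReal (hdle u)
      exact le_trans h3 (add_le_add le_rfl h2)
    -- containment
    have hsub : ∀ u I, u ∈ I →
        w I ⊆ Set.Ico 0 (beta * d u + gam * ∑ x ∈ G.neighborFinset u, d x) := by
      intro u I huI
      by_cases hcand : IndepFinset G I ∧ I ⊆ S
      · have huS : u ∈ S := hcand.2 huI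
        -- local occupancy gives the rate bound
        have hlocc : 1 ≤ beta * p u + gam * ∑ x ∈ G.neighborFinset u, p x := by
          have hlo := local_occupancy G hG3 hl hb hg hdeg hkey S huS
          have hmono : ∑ x ∈ G.neighborFinset u ∩ S, occ G lam S x
              ≤ ∑ x ∈ G.neighborFinset u, occ G lam S x :=
            Finset.sum_le_sum_of_subset_of_nonneg Finset.inter_subset_left
              (fun x _ _ => occ_nonneg G hl S x)
          have h1 : Z G lam S ≤ beta * occ G lam S u
              + gam * ∑ x ∈ G.neighborFinset u, occ G lam S x := by
            nlinarith
          have h2 : beta * p u + gam * ∑ x ∈ G.neighborFinset u, p x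
              = (beta * occ G lam S u + gam * ∑ x ∈ G.neighborFinset u, occ G lam S x)
                  / Z G lam S := by
            rw [hp]
            dsimp only
            rw [add_div, mul_div_assoc, mul_div_assoc, Finset.sum_div]
          rw [h2, le_div_iff₀ hZ, one_mul]
          exact h1
        set B' : ℝ := beta * d' u + gam * ∑ x ∈ G.neighborFinset u, d' x with hB'def
        have hB'0 : 0 ≤ B' :=
          add_nonneg (mul_nonneg hb (hd'0 u))
            (mul_nonneg hg (Finset.sum_nonneg fun x _ => hd'0 x))
        have hBB : t + B' ≤ beta * d u + gam * ∑ x ∈ G.neighborFinset u, d x := by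
          have e1 : t * (beta * p u + gam * ∑ x ∈ G.neighborFinset u, p x)
              = beta * (t * p u) + gam * ∑ x ∈ G.neighborFinset u, t * p x := by
            rw [← Finset.mul_sum]
            ring
          have e2 : t * 1 ≤ t * (beta * p u + gam * ∑ x ∈ G.neighborFinset u, p x) :=
            mul_le_mul_of_nonneg_left hlocc (le_of_lt ht)
          have e3 : beta * (t * p u) ≤ beta * (d u - d' u) :=
            mul_le_mul_of_nonneg_left (hdiff u) hb
          have e4 : ∑ x ∈ G.neighborFinset u, t * p x
              ≤ ∑ x ∈ G.neighborFinset u, (d x - d' x) :=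
            Finset.sum_le_sum fun x _ => hdiff x
          have e5 : gam * ∑ x ∈ G.neighborFinset u, t * p x
              ≤ gam * ∑ x ∈ G.neighborFinset u, (d x - d' x) :=
            mul_le_mul_of_nonneg_left e4 hg
          have e6 : ∑ x ∈ G.neighborFinset u, (d x - d' x)
              = ∑ x ∈ G.neighborFinset u, d x - ∑ x ∈ G.neighborFinset u, d' x :=
            Finset.sum_sub_distrib _ _
          rw [e6] at e5
          rw [e1] at e2
          rw [hB'def]
          linarith
        intro x hx
        rcases hx with hxb | hxs
        · have h1 := hblksub I hxb
          refine ⟨h1.1, ?_⟩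
          have := h1.2
          linarith [this, hBB, hB'0]
        · have h1 : x - t ∈ w' I := hxs
          have h2 := hw'sub u I huI h1
          rw [Set.mem_Ico] at h2
          constructor
          · linarith [h2.1, le_of_lt ht]
          · rw [hB'def] at hBB
            linarith [h2.2]
      · rw [hempty I hcand]
        exact Set.empty_subset _
    exact ⟨w, hmeas, hempty, fun I => by
        intro x hx
        rcases hx with hxb | hxs
        · exact le_trans (hoff0 I) hxb.1
        · have := hshfsub I hxs
          rw [Set.mem_Ici] at this ⊢
          linarith,
      hdisj, hcov, hsub⟩

end FracMolloy

namespace FracMolloy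
open Filter Real
set_option maxHeartbeats 2000000

lemma log_ge_one {y : ℝ} (hy : 3 ≤ y) : 1 ≤ Real.log y := by
  have h1 : Real.exp 1 ≤ 3 := by
    have := Real.exp_one_lt_d9
    linarith
  have h2 : Real.exp 1 ≤ y := h1.trans hy
  calc (1:ℝ) = Real.log (Real.exp 1) := (Real.log_exp 1).symm
    _ ≤ Real.log y := Real.log_le_log (Real.exp_pos 1) h2

lemma log_quadratic_bound {lam : ℝ} (h0 : 0 < lam) (h1 : lam ≤ 1 / 4) :
    Real.log (1 + lam) ≤ lam - lam ^ 2 / 3 := by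
  have hy : 0 ≤ lam - lam ^ 2 / 3 := by nlinarith
  have hq := Real.quadratic_le_exp_of_nonneg hy
  have h2 : 1 + lam ≤ Real.exp (lam - lam ^ 2 / 3) := by nlinarith
  calc Real.log (1 + lam) ≤ Real.log (Real.exp (lam - lam ^ 2 / 3)) :=
        Real.log_le_log (by linarith) h2
    _ = lam - lam ^ 2 / 3 := Real.log_exp _

lemma eventual_growth (c a : ℝ) (hc : 0 < c) (ha : 0 < a) :
    ∀ᶠ y : ℝ in atTop, Real.log y ≤ c * y ^ a := by
  have h := (isLittleO_log_rpow_atTop ha).def hc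
  filter_upwards [h, eventually_ge_atTop (1:ℝ)] with y hy h1
  have hlog : 0 ≤ Real.log y := Real.log_nonneg h1
  have hpow : 0 ≤ y ^ a := Real.rpow_nonneg (by linarith) a
  rw [Real.norm_eq_abs, Real.norm_eq_abs, abs_of_nonneg hlog, abs_of_nonneg hpow] at hy
  exact hy

lemma numeric (ε : ℝ) (hε : 0 < ε) :
    ∃ Δ₀ : ℕ, ∀ Δ : ℕ, Δ₀ ≤ Δ →
      ∃ lam beta gam : ℝ, 0 < lam ∧ 0 ≤ beta ∧ 0 ≤ gam ∧
        (∀ f : ℕ, f ≤ Δ →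
          lam + (1 + lam) ^ f ≤ beta * lam + gam * (f * (lam * (1 + lam) ^ (f - 1)))) ∧
        beta + gam * Δ ≤ (1 + ε) * Δ / Real.log Δ := by
  set lam : ℝ := min ε 1 / 4 with hlam
  have hl : 0 < lam := by
    rw [hlam]
    have := lt_min hε one_pos
    linarith
  have hl4 : lam ≤ 1 / 4 := by
    rw [hlam]
    have := min_le_right ε 1
    linarith
  have hle : 4 * lam ≤ ε := by
    rw [hlam]
    have := min_le_left ε 1
    linarith
  -- the eventual condition
  have hev : ∀ᶠ y : ℝ in atTop, 3 ≤ y ∧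
      Real.log y * (1 + (1 + lam) * y ^ ((1:ℝ) - lam / 12) / lam) ≤ ε / 2 * y := by
    have ha : (0:ℝ) < lam / 12 := by linarith
    have hc2 : (0:ℝ) < ε / 4 * (lam / (1 + lam)) := by positivity
    filter_upwards [eventually_ge_atTop (3:ℝ),
      eventual_growth (ε / 4) 1 (by linarith) one_pos,
      eventual_growth (ε / 4 * (lam / (1 + lam))) (lam / 12) hc2 ha] with y h3 hA hB
    refine ⟨h3, ?_⟩
    have hy1 : (1:ℝ) ≤ y := by linarith
    have hy0 : (0:ℝ) < y := by linarith
    have hA' : Real.log y ≤ ε / 4 * y := by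
      rwa [Real.rpow_one] at hA
    have hpow_pos : (0:ℝ) < y ^ ((1:ℝ) - lam / 12) := Real.rpow_pos_of_pos hy0 _
    have hsplit : y ^ (lam / 12) * y ^ ((1:ℝ) - lam / 12) = y := by
      rw [← Real.rpow_add hy0, add_sub_cancel, Real.rpow_one]
    have hB' : Real.log y * ((1 + lam) * y ^ ((1:ℝ) - lam / 12) / lam) ≤ ε / 4 * y := by
      have h1 : Real.log y * ((1 + lam) * y ^ ((1:ℝ) - lam / 12) / lam)
          ≤ (ε / 4 * (lam / (1 + lam)) * y ^ (lam / 12))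
              * ((1 + lam) * y ^ ((1:ℝ) - lam / 12) / lam) := by
        apply mul_le_mul_of_nonneg_right hB
        positivity
      have h2 : (ε / 4 * (lam / (1 + lam)) * y ^ (lam / 12))
          * ((1 + lam) * y ^ ((1:ℝ) - lam / 12) / lam)
          = ε / 4 * (y ^ (lam / 12) * y ^ ((1:ℝ) - lam / 12)) := by
        field_simp
      rw [h2, hsplit] at h1
      exact h1
    have hlog0 : 0 ≤ Real.log y := Real.log_nonneg hy1
    calc Real.log y * (1 + (1 + lam) * y ^ ((1:ℝ) - lam / 12) / lam)
        = Real.log y + Real.log y * ((1 + lam) * y ^ ((1:ℝ) - lam / 12) / lam) := by ring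
      _ ≤ ε / 4 * y + ε / 4 * y := add_le_add hA' hB'
      _ = ε / 2 * y := by ring
  obtain ⟨Δ₀, hΔ₀⟩ := Filter.eventually_atTop.mp
    ((tendsto_natCast_atTop_atTop (R := ℝ)).eventually hev)
  refine ⟨Δ₀, fun Δ hΔ => ?_⟩
  obtain ⟨h3, hgrowth⟩ := hΔ₀ Δ hΔ
  have hΔ0 : (0:ℝ) < Δ := by linarith
  set L : ℝ := Real.log Δ with hLdef
  have hL1 : 1 ≤ L := log_ge_one h3
  have hL0 : 0 < L := by linarith
  -- the cut-off
  set x : ℝ := (1 + lam) ^ 2 * L / (lam * (1 + 2 * lam)) with hxdef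
  have hden : (0:ℝ) < lam * (1 + 2 * lam) := by nlinarith
  have hxpos : 0 < x := by
    rw [hxdef]
    apply div_pos _ hden
    nlinarith
  set f0 : ℕ := ⌈x⌉₊ with hf0def
  have hf0x : x ≤ f0 := Nat.le_ceil x
  have hf0x1 : (f0 : ℝ) ≤ x + 1 := by
    have := Nat.ceil_lt_add_one (le_of_lt hxpos)
    linarith
  have hf01 : 1 ≤ f0 := by
    rw [hf0def]
    rw [Nat.one_le_ceil_iff]
    exact hxpos
  have hf0pos : (0:ℝ) < f0 := by
    have : (1:ℝ) ≤ f0 := by exact_mod_cast hf01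
    linarith
  set gam : ℝ := (1 + lam) ^ 2 / (lam * f0) with hgamdef
  set beta : ℝ := 1 + (1 + lam) ^ f0 / lam with hbetadef
  have hbpos : 0 < beta := by
    rw [hbetadef]
    have : (0:ℝ) < (1 + lam) ^ f0 / lam := div_pos (pow_pos (by linarith) _) hl
    linarith
  have hgpos : 0 < gam := by
    rw [hgamdef]
    apply div_pos (by nlinarith) (by positivity)
  refine ⟨lam, beta, gam, hl, le_of_lt hbpos, le_of_lt hgpos, ?_, ?_⟩
  · -- the key pointwise inequality
    intro f hf
    rcases le_or_gt f f0 with hff0 | hff0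
    · have hbl : beta * lam = lam + (1 + lam) ^ f0 := by
        rw [hbetadef]
        field_simp
      have hpow : (1 + lam) ^ f ≤ (1 + lam) ^ f0 :=
        pow_le_pow_right₀ (by linarith) hff0
      have hterm : 0 ≤ gam * (f * (lam * (1 + lam) ^ (f - 1))) := by
        have : (0:ℝ) ≤ (f:ℝ) := Nat.cast_nonneg f
        have h2 : (0:ℝ) ≤ (1 + lam) ^ (f - 1) := le_of_lt (pow_pos (by linarith) _)
        positivity
      linarith
    · -- f0 < f
      have h1f : 1 ≤ f := le_trans hf01 (le_of_lt hff0)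
      have hsplit : (1 + lam) ^ f = (1 + lam) ^ (f - 1) * (1 + lam) := by
        rw [← pow_succ]
        congr 1
        omega
      have hge1 : (1:ℝ) ≤ (1 + lam) ^ f := by
        have := pow_le_pow_left₀ (by norm_num : (0:ℝ) ≤ 1) (by linarith : (1:ℝ) ≤ 1 + lam) f
        simpa using this
      have hposf1 : (0:ℝ) < (1 + lam) ^ (f - 1) := pow_pos (by linarith) _
      have hbl0 : 0 ≤ beta * lam := mul_nonneg (le_of_lt hbpos) (le_of_lt hl)
      have hf0f : (f0 : ℝ) ≤ (f : ℝ) := Nat.cast_le.mpr (le_of_lt hff0)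
      have hg_eq : gam * (f * (lam * (1 + lam) ^ (f - 1)))
          = (1 + lam) ^ 2 * (1 + lam) ^ (f - 1) * ((f : ℝ) / f0) := by
        rw [hgamdef]
        field_simp
      have hfd1 : (1:ℝ) ≤ (f : ℝ) / f0 := by
        rw [le_div_iff₀ hf0pos]
        linarith
      have key1 : lam + (1 + lam) ^ f ≤ (1 + lam) ^ 2 * (1 + lam) ^ (f - 1) := by
        have he : (1 + lam) ^ 2 * (1 + lam) ^ (f - 1) = (1 + lam) * (1 + lam) ^ f := by
          rw [hsplit]
          ring
        rw [he]
        nlinarith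
      have key2 : (1 + lam) ^ 2 * (1 + lam) ^ (f - 1)
          ≤ (1 + lam) ^ 2 * (1 + lam) ^ (f - 1) * ((f : ℝ) / f0) := by
        nlinarith
      rw [hg_eq]
      calc lam + (1 + lam) ^ f ≤ (1 + lam) ^ 2 * (1 + lam) ^ (f - 1) := key1
        _ ≤ (1 + lam) ^ 2 * (1 + lam) ^ (f - 1) * ((f : ℝ) / f0) := key2
        _ ≤ beta * lam + (1 + lam) ^ 2 * (1 + lam) ^ (f - 1) * ((f : ℝ) / f0) :=
            le_add_of_nonneg_left hbl0
  · -- the budget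
    have hgam_le : gam ≤ (1 + 2 * lam) / L := by
      have h1 : gam ≤ (1 + lam) ^ 2 / (lam * x) := by
        rw [hgamdef]
        exact div_le_div_of_nonneg_left (by nlinarith) (mul_pos hl hxpos)
          (mul_le_mul_of_nonneg_left hf0x (le_of_lt hl))
      have h2 : (1 + lam) ^ 2 / (lam * x) = (1 + 2 * lam) / L := by
        rw [hxdef]
        field_simp
      rw [h2] at h1
      exact h1
    have hbeta_le : beta ≤ ε / 2 * Δ / L := by
      -- bound (1+lam)^f0 by Δ^(1 - lam/12)
      have hbase1 : (1:ℝ) ≤ 1 + lam := by linarith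
      have hpow1 : ((1 + lam) : ℝ) ^ f0 = (1 + lam) ^ (f0 : ℝ) :=
        (Real.rpow_natCast _ _).symm
      have hpow2 : (1 + lam) ^ (f0 : ℝ) ≤ (1 + lam) ^ (x + 1) :=
        Real.rpow_le_rpow_of_exponent_le hbase1 hf0x1
      have hpow3 : (1 + lam) ^ (x + 1) = (1 + lam) * (1 + lam) ^ x := by
        rw [Real.rpow_add (by linarith), Real.rpow_one]
        ring
      have hlog := log_quadratic_bound hl hl4
      have hxlog : Real.log (1 + lam) * x ≤ (1 - lam / 12) * L := by
        have h1 : Real.log (1 + lam) * x ≤ (lam - lam ^ 2 / 3) * x :=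
          mul_le_mul_of_nonneg_right hlog (le_of_lt hxpos)
        have hpoly : (lam - lam ^ 2 / 3) * (1 + lam) ^ 2
            ≤ (1 - lam / 12) * (lam * (1 + 2 * lam)) := by nlinarith
        have e1 : (lam - lam ^ 2 / 3) * x
            = ((lam - lam ^ 2 / 3) * (1 + lam) ^ 2) * (L / (lam * (1 + 2 * lam))) := by
          rw [hxdef]
          ring
        have e2 : (1 - lam / 12) * L
            = ((1 - lam / 12) * (lam * (1 + 2 * lam))) * (L / (lam * (1 + 2 * lam))) := by
          field_simp
        have h2 : (lam - lam ^ 2 / 3) * x ≤ (1 - lam / 12) * L := by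
          rw [e1, e2]
          apply mul_le_mul_of_nonneg_right hpoly
          positivity
        linarith
      have hpow4 : (1 + lam) ^ x ≤ (Δ : ℝ) ^ ((1:ℝ) - lam / 12) := by
        rw [Real.rpow_def_of_pos (by linarith : (0:ℝ) < 1 + lam),
          Real.rpow_def_of_pos hΔ0]
        apply Real.exp_le_exp.mpr
        calc Real.log (1 + lam) * x ≤ (1 - lam / 12) * L := hxlog
          _ = Real.log Δ * (1 - lam / 12) := by rw [hLdef]; ring
      have h5 : (1 + lam) ^ f0 ≤ (1 + lam) * (Δ : ℝ) ^ ((1:ℝ) - lam / 12) := by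
        rw [hpow1]
        calc (1 + lam) ^ (f0 : ℝ) ≤ (1 + lam) ^ (x + 1) := hpow2
          _ = (1 + lam) * (1 + lam) ^ x := hpow3
          _ ≤ (1 + lam) * (Δ : ℝ) ^ ((1:ℝ) - lam / 12) :=
              mul_le_mul_of_nonneg_left hpow4 (by linarith)
      have hbb : beta ≤ 1 + (1 + lam) * (Δ : ℝ) ^ ((1:ℝ) - lam / 12) / lam := by
        rw [hbetadef]
        have h6 : (1 + lam) ^ f0 / lam ≤ (1 + lam) * (Δ : ℝ) ^ ((1:ℝ) - lam / 12) / lam :=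
          by gcongr
        linarith
      have hdivL : 1 + (1 + lam) * (Δ : ℝ) ^ ((1:ℝ) - lam / 12) / lam ≤ ε / 2 * Δ / L := by
        rw [le_div_iff₀ hL0]
        calc (1 + (1 + lam) * (Δ : ℝ) ^ ((1:ℝ) - lam / 12) / lam) * L
            = L * (1 + (1 + lam) * (Δ : ℝ) ^ ((1:ℝ) - lam / 12) / lam) := by ring
          _ ≤ ε / 2 * Δ := hgrowth
      linarith
    have hgamD : gam * Δ ≤ (1 + 2 * lam) * Δ / L := by
      calc gam * Δ ≤ ((1 + 2 * lam) / L) * Δ :=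
            mul_le_mul_of_nonneg_right hgam_le (le_of_lt hΔ0)
        _ = (1 + 2 * lam) * Δ / L := by ring
    calc beta + gam * Δ ≤ ε / 2 * Δ / L + (1 + 2 * lam) * Δ / L := add_le_add hbeta_le hgamD
      _ = (ε / 2 + (1 + 2 * lam)) * ((Δ:ℝ) / L) := by ring
      _ ≤ (1 + ε) * ((Δ:ℝ) / L) := by
          apply mul_le_mul_of_nonneg_right (by linarith)
          positivity
      _ = (1 + ε) * Δ / L := by ring

end FracMolloy

set_option maxHeartbeats 1000000 in
/-- Fractional Molloy theorem: for every `ε > 0` and sufficiently large `Δ`, every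
triangle-free graph of maximum degree at most `Δ` has a fractional colouring assigning
each vertex a subset of `[0, (1+ε)Δ/log Δ)`; in particular its fractional chromatic
number is at most `(1+ε)Δ/log Δ`. -/
theorem fractional_molloy (ε : ℝ) (hε : 0 < ε) :
    ∃ Δ₀ : ℕ, ∀ Δ : ℕ, Δ₀ ≤ Δ →
      ∀ (V : Type) [Fintype V] [DecidableEq V] (G : SimpleGraph V) [DecidableRel G.Adj],
        G.CliqueFree 3 →
        (∀ v : V, G.degree v ≤ Δ) →
        ∃ w : Finset V → Set ℝ,
          (∀ I : Finset V, IndepFinset G I → MeasurableSet (w I)) ∧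
          (∀ I J : Finset V, IndepFinset G I → IndepFinset G J → I ≠ J →
            Disjoint (w I) (w J)) ∧
          (∀ v : V,
            1 ≤ ∑ I : Finset V,
              if IndepFinset G I ∧ v ∈ I then MeasureTheory.volume (w I) else 0) ∧
          (∀ v : V, ∀ I : Finset V, IndepFinset G I → v ∈ I →
            w I ⊆ Set.Ico (0 : ℝ) ((1 + ε) * (Δ : ℝ) / Real.log Δ)) := by
  obtain ⟨Δ₀, hΔ₀⟩ := FracMolloy.numeric ε hε
  refine ⟨Δ₀, fun Δ hΔ V _ _ G _ hG3 hdeg => ?_⟩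
  obtain ⟨lam, beta, gam, hl, hb, hg, hkey, hbudget⟩ := hΔ₀ Δ hΔ
  obtain ⟨w, hmeas, hempty, hnonneg, hdisj, hcov, hsub⟩ :=
    FracMolloy.greedy G hG3 hl hb hg hdeg hkey (Fintype.card V) Finset.univ
      (by rw [Finset.card_univ]) (fun _ => 1) (fun _ => zero_le_one)
      (fun u => by simp)
  refine ⟨w, fun I _ => hmeas I, fun I J _ _ hIJ => hdisj I J hIJ, fun v => ?_,
    fun v I _ hvI => ?_⟩
  · have h1 := hcov v
    rwa [ENNReal.ofReal_one] at h1
  · refine (hsub v I hvI).trans (Set.Ico_subset_Ico_right ?_)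
    have h1 : ∑ x ∈ G.neighborFinset v, (1 : ℝ) = (G.degree v : ℝ) := by
      rw [Finset.sum_const, nsmul_eq_mul, mul_one, G.card_neighborFinset_eq_degree]
    rw [h1, mul_one]
    have h2 : beta + gam * (G.degree v : ℝ) ≤ beta + gam * Δ := by
      have : (G.degree v : ℝ) ≤ (Δ : ℝ) := Nat.cast_le.mpr (hdeg v)
      nlinarith
    exact h2.trans hbudget
end

section
/- For every ε > 0 there exists Δ₀ such that for all Δ ≥ Δ₀, every finite triangle-free simple graph G on n vertices with maximum degree at most Δ contains an independent set of size at least n·log Δ / ((1+ε)·Δ). -/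
open Finset

namespace ShearerAux


variable {V : Type} [DecidableEq V]

lemma pow_w (lam : ℝ) (F : Finset V) :
    ∑ S ∈ F.powerset, lam ^ S.card = (1 + lam) ^ F.card := by
  induction F using Finset.induction_on with
  | empty => simp
  | insert a F ha ih =>
    rw [Finset.sum_powerset_insert ha, ih, card_insert_of_notMem ha]
    have h2 : ∑ S ∈ F.powerset, lam ^ (insert a S).card
        = ∑ S ∈ F.powerset, lam * lam ^ S.card := by
      refine Finset.sum_congr rfl fun S hS => ?_
      rw [card_insert_of_notMem fun h => ha (Finset.mem_powerset.1 hS h)]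
      ring
    rw [h2, ← Finset.mul_sum, ih]
    ring

lemma pow_g (lam : ℝ) (F : Finset V) :
    (1 + lam) * ∑ S ∈ F.powerset, (S.card : ℝ) * lam ^ S.card
      = (F.card : ℝ) * lam * (1 + lam) ^ F.card := by
  induction F using Finset.induction_on with
  | empty => simp
  | insert a F ha ih =>
    rw [Finset.sum_powerset_insert ha, card_insert_of_notMem ha]
    have h2 : ∑ S ∈ F.powerset, ((insert a S).card : ℝ) * lam ^ (insert a S).card
        = ∑ S ∈ F.powerset, (lam * ((S.card : ℝ) * lam ^ S.card) + lam * lam ^ S.card) := by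
      refine Finset.sum_congr rfl fun S hS => ?_
      rw [card_insert_of_notMem fun h => ha (Finset.mem_powerset.1 hS h)]
      push_cast
      ring
    rw [h2, Finset.sum_add_distrib, ← Finset.mul_sum, ← Finset.mul_sum, pow_w]
    push_cast
    linear_combination (1 + lam) * ih



variable [Fintype V] (G : SimpleGraph V) [DecidableRel G.Adj]

def indS : Finset (Finset V) :=
  Finset.univ.filter fun s => ∀ u ∈ s, ∀ w ∈ s, ¬ G.Adj u w

lemma mem_indS {s : Finset V} : s ∈ indS G ↔ ∀ u ∈ s, ∀ w ∈ s, ¬ G.Adj u w := by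
  simp [indS]

/-- closed neighborhood -/
def cN (v : V) : Finset V := insert v (G.neighborFinset v)

/-- independent sets avoiding the closed neighborhood of `v` -/
def JS (v : V) : Finset (Finset V) :=
  (indS G).filter fun J => Disjoint J (cN G v)

/-- free neighbors of `v` given outside configuration `J` -/
def FJ (v : V) (J : Finset V) : Finset V :=
  (G.neighborFinset v).filter fun u => ∀ w ∈ J, ¬ G.Adj u w

/-- the fiber of independent sets restricting to `J` outside `N[v]` -/
def fib (v : V) (J : Finset V) : Finset (Finset V) :=
  (FJ G v J).powerset.image (fun S => J ∪ S) ∪ {insert v J}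

variable {G}

omit [Fintype V] [DecidableRel G.Adj] in
lemma neighbors_indep (h3 : G.CliqueFree 3) {v u w : V}
    (hu : G.Adj v u) (hw : G.Adj v w) : ¬ G.Adj u w := by
  intro huw
  exact h3 {v, u, w} (SimpleGraph.is3Clique_triple_iff.2 ⟨hu, hw, huw⟩)

lemma fib_subset_indS (h3 : G.CliqueFree 3) {v : V} {J : Finset V} (hJ : J ∈ JS G v) :
    fib G v J ⊆ indS G := by
  rw [JS, Finset.mem_filter] at hJ
  obtain ⟨hJi, hJd⟩ := hJ
  rw [mem_indS] at hJi
  intro s hs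
  rw [fib, Finset.mem_union] at hs
  rcases hs with hs | hs
  · obtain ⟨S, hS, rfl⟩ := Finset.mem_image.1 hs
    rw [Finset.mem_powerset] at hS
    rw [mem_indS]
    intro a ha b hb hab
    rw [Finset.mem_union] at ha hb
    rcases ha with ha | ha <;> rcases hb with hb | hb
    · exact hJi a ha b hb hab
    · -- a ∈ J, b ∈ S ⊆ FJ: b has no neighbor in J
      have := hS hb
      rw [FJ, Finset.mem_filter] at this
      exact this.2 a ha hab.symm
    · have := hS ha
      rw [FJ, Finset.mem_filter] at this
      exact this.2 b hb hab
    · -- both in S ⊆ N(v): triangle-free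
      have ha' := (Finset.mem_filter.1 (hS ha)).1
      have hb' := (Finset.mem_filter.1 (hS hb)).1
      rw [SimpleGraph.mem_neighborFinset] at ha' hb'
      exact neighbors_indep h3 ha' hb' hab
  · rw [Finset.mem_singleton] at hs
    subst hs
    rw [mem_indS]
    intro a ha b hb hab
    rw [Finset.mem_insert] at ha hb
    have hvJ : ∀ x ∈ J, ¬ G.Adj v x := by
      intro x hx hadj
      exact (Finset.disjoint_left.1 hJd hx)
        (by rw [cN, Finset.mem_insert, SimpleGraph.mem_neighborFinset]; exact Or.inr hadj)
    rcases ha with rfl | ha <;> rcases hb with rfl | hb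
    · exact G.irrefl hab
    · exact hvJ b hb hab
    · exact hvJ a ha hab.symm
    · exact hJi a ha b hb hab

lemma fib_key {v : V} {J s : Finset V} (hJ : J ∈ JS G v) (hs : s ∈ fib G v J) :
    s \ cN G v = J := by
  rw [JS, Finset.mem_filter] at hJ
  have hJd := hJ.2
  rw [fib, Finset.mem_union] at hs
  rcases hs with hs | hs
  · obtain ⟨S, hS, rfl⟩ := Finset.mem_image.1 hs
    rw [Finset.mem_powerset] at hS
    have hSsub : S ⊆ cN G v := fun x hx => by
      have := (Finset.mem_filter.1 (hS hx)).1
      exact Finset.mem_insert_of_mem this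
    rw [Finset.union_sdiff_distrib, Finset.sdiff_eq_self_of_disjoint hJd,
      Finset.sdiff_eq_empty_iff_subset.2 hSsub, Finset.union_empty]
  · rw [Finset.mem_singleton] at hs
    subst hs
    rw [Finset.insert_sdiff_of_mem _ (show v ∈ cN G v by
        rw [cN]; exact Finset.mem_insert_self v _),
      Finset.sdiff_eq_self_of_disjoint hJd]

/-- every independent set lies in the fiber of its restriction -/
lemma indS_mem_fib {v : V} {s : Finset V} (hs : s ∈ indS G) :
    s \ cN G v ∈ JS G v ∧ s ∈ fib G v (s \ cN G v) := by
  rw [mem_indS] at hs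
  set J := s \ cN G v with hJdef
  have hJi : J ∈ indS G := by
    rw [mem_indS]
    intro a ha b hb
    exact hs a (Finset.mem_sdiff.1 ha).1 b (Finset.mem_sdiff.1 hb).1
  have hJd : Disjoint J (cN G v) := Finset.sdiff_disjoint
  constructor
  · rw [JS, Finset.mem_filter]; exact ⟨hJi, hJd⟩
  · rw [fib, Finset.mem_union]
    by_cases hv : v ∈ s
    · right
      rw [Finset.mem_singleton]
      ext x
      rw [Finset.mem_insert, Finset.mem_sdiff, cN, Finset.mem_insert,
        SimpleGraph.mem_neighborFinset]
      constructor
      · intro hx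
        by_cases hxv : x = v
        · exact Or.inl hxv
        · refine Or.inr ⟨hx, ?_⟩
          push_neg
          refine ⟨hxv, fun hadj => hs v hv x hx hadj⟩
      · rintro (rfl | ⟨hx, _⟩) <;> [exact hv; exact hx]
    · left
      rw [Finset.mem_image]
      refine ⟨s ∩ G.neighborFinset v, ?_, ?_⟩
      · rw [Finset.mem_powerset, FJ]
        intro x hx
        rw [Finset.mem_inter] at hx
        rw [Finset.mem_filter]
        refine ⟨hx.2, fun w hw hadj => ?_⟩
        exact hs x hx.1 w (Finset.mem_sdiff.1 hw).1 hadj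
      · ext x
        rw [Finset.mem_union, Finset.mem_sdiff, Finset.mem_inter, cN, Finset.mem_insert]
        constructor
        · rintro (⟨hx, _⟩ | ⟨hx, _⟩) <;> exact hx
        · intro hx
          by_cases hxn : x ∈ G.neighborFinset v
          · exact Or.inr ⟨hx, hxn⟩
          · left
            refine ⟨hx, ?_⟩
            push_neg
            exact ⟨fun h => hv (h ▸ hx), hxn⟩

/-- partition of the sum over independent sets into fibers -/
lemma sum_fib (h3 : G.CliqueFree 3) (v : V) (f : Finset V → ℝ) :
    ∑ s ∈ indS G, f s = ∑ J ∈ JS G v, ∑ s ∈ fib G v J, f s := by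
  rw [← Finset.sum_biUnion]
  · apply Finset.sum_congr _ fun _ _ => rfl
    ext s
    rw [Finset.mem_biUnion]
    constructor
    · intro hs
      exact ⟨s \ cN G v, (indS_mem_fib hs).1, (indS_mem_fib hs).2⟩
    · rintro ⟨J, hJ, hs⟩
      exact fib_subset_indS h3 hJ hs
  · intro J₁ h₁ J₂ h₂ hne
    rw [Function.onFun, Finset.disjoint_left]
    intro s hs₁ hs₂
    exact hne ((fib_key h₁ hs₁).symm.trans (fib_key h₂ hs₂))



section fibsums

variable {v : V} {J : Finset V} (hJd : Disjoint J (cN G v))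
include hJd

omit hJd in
lemma FJ_subset : FJ G v J ⊆ G.neighborFinset v := Finset.filter_subset _ _

lemma v_not_mem_union {S : Finset V} (hS : S ⊆ FJ G v J) : v ∉ J ∪ S := by
  rw [Finset.mem_union]
  rintro (h | h)
  · exact Finset.disjoint_left.1 hJd h (Finset.mem_insert_self v _)
  · have := FJ_subset (hS h)
    rw [SimpleGraph.mem_neighborFinset] at this
    exact G.irrefl this

lemma J_disj_nbhd : Disjoint J (G.neighborFinset v) :=
  Finset.disjoint_of_subset_right (Finset.subset_insert _ _) hJd

lemma union_inter_nbhd {S : Finset V} (hS : S ⊆ FJ G v J) :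
    (J ∪ S) ∩ G.neighborFinset v = S := by
  rw [Finset.union_inter_distrib_right,
    Finset.disjoint_iff_inter_eq_empty.1 (J_disj_nbhd hJd), Finset.empty_union,
    Finset.inter_eq_left]
  exact hS.trans FJ_subset

lemma fib_disj : Disjoint ((FJ G v J).powerset.image (fun S => J ∪ S))
    ({insert v J} : Finset (Finset V)) := by
  rw [Finset.disjoint_right]
  intro s hs hs'
  rw [Finset.mem_singleton] at hs
  obtain ⟨S, hS, rfl⟩ := Finset.mem_image.1 hs'
  rw [Finset.mem_powerset] at hS
  exact v_not_mem_union hJd hS (hs ▸ Finset.mem_insert_self v J)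

lemma fib_inj : Set.InjOn (fun S => J ∪ S) ((FJ G v J).powerset : Set (Finset V)) := by
  intro S₁ h₁ S₂ h₂ h
  simp only [Finset.coe_powerset, Set.mem_preimage, Set.mem_powerset_iff,
    Finset.coe_subset] at h₁ h₂
  have e₁ := union_inter_nbhd hJd h₁
  have e₂ := union_inter_nbhd hJd h₂
  simp only at h
  rw [← e₁, ← e₂, h]

lemma card_union_fib {S : Finset V} (hS : S ⊆ FJ G v J) :
    (J ∪ S).card = J.card + S.card :=
  Finset.card_union_of_disjoint
    (Finset.disjoint_of_subset_right (hS.trans FJ_subset) (J_disj_nbhd hJd))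

lemma card_insert_fib : (insert v J).card = J.card + 1 :=
  Finset.card_insert_of_notMem fun h =>
    Finset.disjoint_left.1 hJd h (Finset.mem_insert_self v _)

lemma fib_W (lam : ℝ) :
    ∑ s ∈ fib G v J, lam ^ s.card
      = lam ^ J.card * ((1 + lam) ^ (FJ G v J).card + lam) := by
  rw [fib, Finset.sum_union (fib_disj hJd), Finset.sum_image (fun a ha b hb h =>
    fib_inj hJd (Finset.mem_coe.2 ha) (Finset.mem_coe.2 hb) h), Finset.sum_singleton,
    card_insert_fib hJd]
  have : ∑ S ∈ (FJ G v J).powerset, lam ^ (J ∪ S).card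
      = ∑ S ∈ (FJ G v J).powerset, lam ^ J.card * lam ^ S.card := by
    refine Finset.sum_congr rfl fun S hS => ?_
    rw [card_union_fib hJd (Finset.mem_powerset.1 hS), pow_add]
  rw [this, ← Finset.mul_sum, pow_w]
  ring

lemma fib_P (lam : ℝ) :
    ∑ s ∈ fib G v J, (if v ∈ s then lam ^ s.card else 0)
      = lam ^ J.card * lam := by
  rw [fib, Finset.sum_union (fib_disj hJd), Finset.sum_image (fun a ha b hb h =>
    fib_inj hJd (Finset.mem_coe.2 ha) (Finset.mem_coe.2 hb) h), Finset.sum_singleton,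
    card_insert_fib hJd]
  have : ∑ S ∈ (FJ G v J).powerset, (if v ∈ J ∪ S then lam ^ (J ∪ S).card else 0)
      = ∑ S ∈ (FJ G v J).powerset, (0 : ℝ) := by
    refine Finset.sum_congr rfl fun S hS => ?_
    rw [if_neg (v_not_mem_union hJd (Finset.mem_powerset.1 hS))]
  rw [this, Finset.sum_const, smul_zero, zero_add,
    if_pos (Finset.mem_insert_self v J), pow_succ]

lemma fib_D (lam : ℝ) :
    (1 + lam) * ∑ s ∈ fib G v J, ((s ∩ G.neighborFinset v).card : ℝ) * lam ^ s.card
      = lam ^ J.card * (((FJ G v J).card : ℝ) * lam * (1 + lam) ^ (FJ G v J).card) := by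
  rw [fib, Finset.sum_union (fib_disj hJd), Finset.sum_image (fun a ha b hb h =>
    fib_inj hJd (Finset.mem_coe.2 ha) (Finset.mem_coe.2 hb) h), Finset.sum_singleton]
  have hins : (insert v J) ∩ G.neighborFinset v = ∅ := by
    rw [Finset.insert_inter_of_notMem (by
      rw [SimpleGraph.mem_neighborFinset]; exact G.irrefl),
      Finset.disjoint_iff_inter_eq_empty.1 (J_disj_nbhd hJd)]
  rw [hins]
  have : ∑ S ∈ (FJ G v J).powerset, (((J ∪ S) ∩ G.neighborFinset v).card : ℝ)
        * lam ^ (J ∪ S).card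
      = ∑ S ∈ (FJ G v J).powerset, lam ^ J.card * ((S.card : ℝ) * lam ^ S.card) := by
    refine Finset.sum_congr rfl fun S hS => ?_
    rw [union_inter_nbhd hJd (Finset.mem_powerset.1 hS),
      card_union_fib hJd (Finset.mem_powerset.1 hS), pow_add]
    ring
  rw [this, ← Finset.mul_sum]
  simp only [Finset.card_empty, Nat.cast_zero, zero_mul, add_zero]
  linear_combination (lam ^ J.card) * pow_g lam (FJ G v J)

end fibsums


/-- the per-fibre analytic inequality -/
lemma star (lam t B Dl : ℝ) (m : ℕ) (hlam : 0 < lam) (hB : 0 < B) (hBt : B < t)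
    (ht1 : t < 1) (hD : 0 < Dl)
    (Hlog : (B * (1 + lam) * Dl / ((1 - t) * lam)) * Real.log (1 + lam)
      ≤ Real.log (lam * (t - B) / B)) :
    B * (1 + lam) * ((1 + lam) ^ m + lam)
      ≤ t * lam * (1 + lam) + ((1 - t) / Dl) * ((m : ℝ) * lam * (1 + lam) ^ m) := by
  have h1l : (0:ℝ) < 1 + lam := by linarith
  have hpow : (0:ℝ) < (1 + lam) ^ m := pow_pos h1l m
  have ht0 : 0 < 1 - t := by linarith
  set z : ℝ := B * (1 + lam) * Dl / ((1 - t) * lam) with hz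
  have hz0 : 0 < z := by positivity
  by_cases hm : (m : ℝ) < z
  · -- small m: use the t-term
    have hrpos : 0 < lam * (t - B) / B := by
      have : 0 < t - B := by linarith
      positivity
    have hpow' : (1 + lam) ^ m ≤ lam * (t - B) / B := by
      have hlog1 : 0 ≤ Real.log (1 + lam) := Real.log_nonneg (by linarith)
      have h1 : Real.log ((1 + lam) ^ m) = (m : ℝ) * Real.log (1 + lam) := by
        rw [Real.log_pow]
      have h2 : (m : ℝ) * Real.log (1 + lam) ≤ z * Real.log (1 + lam) :=
        mul_le_mul_of_nonneg_right hm.le hlog1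
      have := h2.trans Hlog
      rw [← h1] at this
      calc (1 + lam) ^ m = Real.exp (Real.log ((1 + lam) ^ m)) :=
            (Real.exp_log hpow).symm
        _ ≤ Real.exp (Real.log (lam * (t - B) / B)) := Real.exp_le_exp.2 this
        _ = lam * (t - B) / B := Real.exp_log hrpos
    have key : B * ((1 + lam) ^ m + lam) ≤ t * lam := by
      have h3 : B * ((1 + lam) ^ m) ≤ B * (lam * (t - B) / B) :=
        mul_le_mul_of_nonneg_left hpow' hB.le
      have h4 : B * (lam * (t - B) / B) = lam * (t - B) := by field_simp
      nlinarith
    have hsec : 0 ≤ ((1 - t) / Dl) * ((m : ℝ) * lam * (1 + lam) ^ m) := by positivity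
    nlinarith [mul_le_mul_of_nonneg_right key h1l.le]
  · -- large m: use the degree term
    push_neg at hm
    have hzz : ((1 - t) / Dl) * (z * lam * (1 + lam) ^ m) = B * (1 + lam) * (1 + lam) ^ m := by
      rw [hz]
      field_simp
    have h5 : ((1 - t) / Dl) * (z * lam * (1 + lam) ^ m)
        ≤ ((1 - t) / Dl) * ((m : ℝ) * lam * (1 + lam) ^ m) := by
      apply mul_le_mul_of_nonneg_left _ (by positivity)
      apply mul_le_mul_of_nonneg_right _ hpow.le
      exact mul_le_mul_of_nonneg_right hm hlam.le
    have h6 : B * lam * (1 + lam) ≤ t * lam * (1 + lam) :=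
      mul_le_mul_of_nonneg_right (mul_le_mul_of_nonneg_right hBt.le hlam.le) h1l.le
    nlinarith [hzz ▸ h5]


variable (G : SimpleGraph V) [DecidableRel G.Adj]

noncomputable def Wsum (lam : ℝ) : ℝ := ∑ s ∈ indS G, lam ^ s.card
noncomputable def Asum (lam : ℝ) : ℝ := ∑ s ∈ indS G, (s.card : ℝ) * lam ^ s.card
noncomputable def Psum (lam : ℝ) (v : V) : ℝ :=
  ∑ s ∈ indS G, if v ∈ s then lam ^ s.card else 0
noncomputable def Dsum (lam : ℝ) (v : V) : ℝ :=
  ∑ s ∈ indS G, ((s ∩ G.neighborFinset v).card : ℝ) * lam ^ s.card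

variable {G}

lemma per_vertex (h3 : G.CliqueFree 3) (v : V) {lam t B Dl : ℝ}
    (hlam : 0 < lam) (hB : 0 < B) (hBt : B < t) (ht1 : t < 1) (hD : 0 < Dl)
    (Hlog : (B * (1 + lam) * Dl / ((1 - t) * lam)) * Real.log (1 + lam)
      ≤ Real.log (lam * (t - B) / B)) :
    B * Wsum G lam ≤ t * Psum G lam v + ((1 - t) / Dl) * Dsum G lam v := by
  have h1l : (0:ℝ) < 1 + lam := by linarith
  rw [← mul_le_mul_iff_right₀ h1l]
  have eW : Wsum G lam = ∑ J ∈ JS G v, ∑ s ∈ fib G v J, lam ^ s.card :=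
    sum_fib h3 v _
  have eP : Psum G lam v
      = ∑ J ∈ JS G v, ∑ s ∈ fib G v J, (if v ∈ s then lam ^ s.card else 0) :=
    sum_fib h3 v _
  have eD : Dsum G lam v
      = ∑ J ∈ JS G v, ∑ s ∈ fib G v J, ((s ∩ G.neighborFinset v).card : ℝ) * lam ^ s.card :=
    sum_fib h3 v _
  rw [eW, eP, eD, mul_add]
  rw [show (1 + lam) * (B * ∑ J ∈ JS G v, ∑ s ∈ fib G v J, lam ^ s.card)
      = ∑ J ∈ JS G v, (1 + lam) * (B * ∑ s ∈ fib G v J, lam ^ s.card) by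
        rw [Finset.mul_sum]; rw [Finset.mul_sum]]
  rw [show (1 + lam) * (t * ∑ J ∈ JS G v, ∑ s ∈ fib G v J, (if v ∈ s then lam ^ s.card else 0))
      = ∑ J ∈ JS G v, (1 + lam) * (t * ∑ s ∈ fib G v J, (if v ∈ s then lam ^ s.card else 0)) by
        rw [Finset.mul_sum]; rw [Finset.mul_sum]]
  rw [show (1 + lam) * ((1 - t) / Dl * ∑ J ∈ JS G v,
        ∑ s ∈ fib G v J, ((s ∩ G.neighborFinset v).card : ℝ) * lam ^ s.card)
      = ∑ J ∈ JS G v, ((1 - t) / Dl) * ((1 + lam) *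
        ∑ s ∈ fib G v J, ((s ∩ G.neighborFinset v).card : ℝ) * lam ^ s.card) by
        rw [Finset.mul_sum, Finset.mul_sum]
        refine Finset.sum_congr rfl fun J _ => by ring]
  rw [← Finset.sum_add_distrib]
  refine Finset.sum_le_sum fun J hJ => ?_
  have hJd : Disjoint J (cN G v) := (Finset.mem_filter.1 hJ).2
  rw [fib_W hJd, fib_P hJd, fib_D hJd]
  have hst := star lam t B Dl (FJ G v J).card hlam hB hBt ht1 hD Hlog
  have hpos : (0:ℝ) ≤ lam ^ J.card := by positivity
  have := mul_le_mul_of_nonneg_left hst hpos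
  nlinarith [this]

lemma sum_P (lam : ℝ) : ∑ v, Psum G lam v = Asum G lam := by
  rw [Asum]
  unfold Psum
  rw [Finset.sum_comm]
  refine Finset.sum_congr rfl fun s _ => ?_
  rw [Finset.sum_ite_mem, Finset.univ_inter, Finset.sum_const, nsmul_eq_mul]

lemma sum_D {lam : ℝ} (hlam : 0 ≤ lam) {Δ : ℕ} (hdeg : ∀ v : V, G.degree v ≤ Δ) :
    ∑ v, Dsum G lam v ≤ (Δ : ℝ) * Asum G lam := by
  unfold Dsum Asum
  rw [Finset.sum_comm, Finset.mul_sum]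
  refine Finset.sum_le_sum fun s _ => ?_
  have key : ∑ v, ((s ∩ G.neighborFinset v).card : ℝ) ≤ (Δ : ℝ) * s.card := by
    have swap : ∑ v, (s ∩ G.neighborFinset v).card = ∑ u ∈ s, G.degree u := by
      have e1 : ∀ v : V, (s ∩ G.neighborFinset v).card
          = ∑ u ∈ s, if u ∈ G.neighborFinset v then 1 else 0 := by
        intro v
        rw [← Finset.filter_mem_eq_inter, Finset.card_filter]
      simp_rw [e1]
      rw [Finset.sum_comm]
      refine Finset.sum_congr rfl fun u hu => ?_
      have huv : ∀ v : V, u ∈ G.neighborFinset v ↔ v ∈ G.neighborFinset u := by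
        intro v
        simp [SimpleGraph.mem_neighborFinset, SimpleGraph.adj_comm]
      simp only [huv]
      rw [Finset.sum_ite_mem, Finset.univ_inter, Finset.sum_const, smul_eq_mul, mul_one]
      rfl
    have le1 : ∑ u ∈ s, G.degree u ≤ ∑ u ∈ s, Δ := Finset.sum_le_sum fun u _ => hdeg u
    calc ∑ v, ((s ∩ G.neighborFinset v).card : ℝ)
        = ((∑ v, (s ∩ G.neighborFinset v).card : ℕ) : ℝ) := by push_cast; rfl
      _ = ((∑ u ∈ s, G.degree u : ℕ) : ℝ) := by rw [swap]
      _ ≤ ((∑ u ∈ s, Δ : ℕ) : ℝ) := by exact_mod_cast le1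
      _ = (Δ : ℝ) * s.card := by simp [Finset.sum_const, mul_comm]
  calc ∑ v, ((s ∩ G.neighborFinset v).card : ℝ) * lam ^ s.card
      = (∑ v, ((s ∩ G.neighborFinset v).card : ℝ)) * lam ^ s.card := by
        rw [Finset.sum_mul]
    _ ≤ ((Δ : ℝ) * s.card) * lam ^ s.card := by
        apply mul_le_mul_of_nonneg_right key (by positivity)
    _ = (Δ : ℝ) * ((s.card : ℝ) * lam ^ s.card) := by ring

lemma exists_big {lam c : ℝ} (hlam : 0 < lam) (hc : c * Wsum G lam ≤ Asum G lam) :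
    ∃ s ∈ indS G, c ≤ (s.card : ℝ) := by
  have hne : (indS G).Nonempty := ⟨∅, by simp [indS]⟩
  obtain ⟨s₀, hs₀, hmax⟩ := Finset.exists_max_image (indS G) Finset.card hne
  refine ⟨s₀, hs₀, ?_⟩
  have hA : Asum G lam ≤ (s₀.card : ℝ) * Wsum G lam := by
    rw [Asum, Wsum, Finset.mul_sum]
    refine Finset.sum_le_sum fun s hs => ?_
    have := hmax s hs
    have hp : (0:ℝ) ≤ lam ^ s.card := by positivity
    apply mul_le_mul_of_nonneg_right _ hp
    exact_mod_cast this
  have hW : 0 < Wsum G lam := by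
    rw [Wsum]
    apply Finset.sum_pos (fun s _ => by positivity) hne
  have := hc.trans hA
  exact le_of_mul_le_mul_right (by linarith [this]) hW



lemma eventual (ε : ℝ) (hε : 0 < ε) :
    ∃ Δ₀ : ℕ, ∀ Δ : ℕ, Δ₀ ≤ Δ →
      1 ≤ Δ ∧ 1 ≤ Real.log Δ ∧ Real.log Δ ≤ (ε/4) * Δ ∧
      2*(Real.log Δ + 1)/(2+ε) ≤ Real.log Δ - 2*Real.log (Real.log Δ) + Real.log (ε/4) := by
  have hlogN : Filter.Tendsto (fun Δ : ℕ => Real.log Δ) Filter.atTop Filter.atTop :=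
    Real.tendsto_log_atTop.comp tendsto_natCast_atTop_atTop
  have E0 : ∀ᶠ Δ : ℕ in Filter.atTop, 1 ≤ Δ := Filter.eventually_ge_atTop 1
  have E1 : ∀ᶠ Δ : ℕ in Filter.atTop, 1 ≤ Real.log Δ := hlogN.eventually_ge_atTop 1
  have E2 : ∀ᶠ Δ : ℕ in Filter.atTop, Real.log Δ ≤ (ε/4) * Δ := by
    have h := Real.isLittleO_log_id_atTop.def (show (0:ℝ) < ε/4 by positivity)
    have h2 := tendsto_natCast_atTop_atTop (R := ℝ) |>.eventually h
    filter_upwards [h2, E0] with Δ hΔ hΔ1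
    have h3 : (0:ℝ) ≤ (Δ:ℝ) := Nat.cast_nonneg Δ
    calc Real.log Δ ≤ ‖Real.log (Δ:ℝ)‖ := Real.le_norm_self _
      _ ≤ ε/4 * ‖(Δ:ℝ)‖ := hΔ
      _ = ε/4 * Δ := by rw [Real.norm_eq_abs, abs_of_nonneg h3]
  have E3' : ∀ᶠ y : ℝ in Filter.atTop,
      2*(y + 1)/(2+ε) ≤ y - 2*Real.log y + Real.log (ε/4) := by
    have hc : (0:ℝ) < (ε/2)/(4+2*ε) := by positivity
    have h := Real.isLittleO_log_id_atTop.def hc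
    have E4 : ∀ᶠ y : ℝ in Filter.atTop,
        2 - (2+ε)*Real.log (ε/4) ≤ (ε/2) * y := by
      have := Filter.eventually_ge_atTop ((2 - (2+ε)*Real.log (ε/4)) * (2/ε))
      filter_upwards [this] with y hy
      have : (2 - (2+ε)*Real.log (ε/4)) * (2/ε) * (ε/2) ≤ y * (ε/2) :=
        mul_le_mul_of_nonneg_right hy (by positivity)
      calc 2 - (2+ε)*Real.log (ε/4)
          = (2 - (2+ε)*Real.log (ε/4)) * (2/ε) * (ε/2) := by field_simp
        _ ≤ y * (ε/2) := this
        _ = (ε/2) * y := by ring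
    filter_upwards [h, E4, Filter.eventually_ge_atTop (1:ℝ)] with y h1 h2 h3
    have hy0 : (0:ℝ) < y := by linarith
    have hlogy : 0 ≤ Real.log y := Real.log_nonneg h3
    have h4 : (4+2*ε) * Real.log y ≤ (ε/2) * y := by
      have : Real.log y ≤ (ε/2)/(4+2*ε) * y := by
        calc Real.log y ≤ ‖Real.log y‖ := Real.le_norm_self _
          _ ≤ (ε/2)/(4+2*ε) * ‖y‖ := h1
          _ = (ε/2)/(4+2*ε) * y := by rw [Real.norm_eq_abs, abs_of_nonneg hy0.le]
      have h5 := mul_le_mul_of_nonneg_left this (show (0:ℝ) ≤ 4+2*ε by linarith)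
      calc (4+2*ε) * Real.log y ≤ (4+2*ε) * ((ε/2)/(4+2*ε) * y) := h5
        _ = (ε/2) * y := by field_simp
    -- need: 2(y+1)/(2+ε) ≤ y - 2 log y + log(ε/4)
    -- equivalent to ε y - 2 ≥ (2+ε)(2 log y - log(ε/4))
    have h2e : (0:ℝ) < 2 + ε := by linarith
    rw [div_le_iff₀ h2e]
    nlinarith [h4, h2]
  have E3 := hlogN.eventually E3'
  have := ((E0.and E1).and (E2.and E3)).exists_forall_of_atTop
  obtain ⟨Δ₀, hΔ₀⟩ := this
  exact ⟨Δ₀, fun Δ hΔ => ⟨(hΔ₀ Δ hΔ).1.1, (hΔ₀ Δ hΔ).1.2, (hΔ₀ Δ hΔ).2.1, (hΔ₀ Δ hΔ).2.2⟩⟩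


end ShearerAux



/-- The Shearer-type bound recovered from the colouring results: for every `ε > 0` and
sufficiently large `Δ`, every triangle-free graph on `n` vertices with maximum degree
at most `Δ` contains an independent set of size at least `n·log Δ/((1+ε)·Δ)`. -/
theorem shearer_independence_bound (ε : ℝ) (hε : 0 < ε) :
    ∃ Δ₀ : ℕ, ∀ Δ : ℕ, Δ₀ ≤ Δ →
      ∀ (V : Type) [Fintype V] (G : SimpleGraph V) [DecidableRel G.Adj],
        G.CliqueFree 3 →
        (∀ v : V, G.degree v ≤ Δ) →
        ∃ I : Finset V, IndepFinset G I ∧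
          (Fintype.card V : ℝ) * Real.log Δ / ((1 + ε) * Δ) ≤ (I.card : ℝ) := by
  obtain ⟨Δ₀, hΔ₀⟩ := ShearerAux.eventual ε hε
  refine ⟨Δ₀, fun Δ hΔ V _ G _ h3 hdeg => ?_⟩
  letI : DecidableEq V := Classical.decEq V
  obtain ⟨hΔ1, hL1, hE2, hE3⟩ := hΔ₀ Δ hΔ
  set L : ℝ := Real.log Δ with hLdef
  have hL0 : (0:ℝ) < L := by linarith
  have hΔR : (1:ℝ) ≤ (Δ:ℝ) := by exact_mod_cast hΔ1
  have hΔ0 : (0:ℝ) < (Δ:ℝ) := by linarith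
  have h1e : (0:ℝ) < 1 + ε := by linarith
  have h2e : (0:ℝ) < 2 + ε := by linarith
  set lam : ℝ := 1/L with hlamdef
  set t : ℝ := ε/(2*(1+ε)) with htdef
  set B : ℝ := L/((1+ε)*(Δ:ℝ)) with hBdef
  have hlam : 0 < lam := by positivity
  have hB : 0 < B := by positivity
  have ht : 0 < t := by positivity
  have ht1 : t < 1 := by
    rw [htdef, div_lt_one (by linarith)]
    linarith
  have ht2 : t/2 = ε/(4*(1+ε)) := by
    rw [htdef, div_div]
    congr 1
    ring
  have hBt2 : B ≤ t/2 := by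
    rw [hBdef, ht2]
    rw [div_le_div_iff₀ (by positivity) (by positivity)]
    calc L * (4*(1+ε)) ≤ (ε/4*Δ) * (4*(1+ε)) := by
          apply mul_le_mul_of_nonneg_right hE2 (by positivity)
      _ = ε * ((1+ε)*Δ) := by ring
  have hBt : B < t := lt_of_le_of_lt hBt2 (by linarith)
  have h1t : (0:ℝ) < 1 - t := by linarith
  -- the key log inequality
  have Hlog : (B * (1 + lam) * (Δ:ℝ) / ((1 - t) * lam)) * Real.log (1 + lam)
      ≤ Real.log (lam * (t - B) / B) := by
    have hz0 : (0:ℝ) ≤ B * (1 + lam) * (Δ:ℝ) / ((1 - t) * lam) := by positivity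
    have step1 : Real.log (1 + lam) ≤ lam := by
      have := Real.log_le_sub_one_of_pos (show (0:ℝ) < 1 + lam by linarith)
      linarith
    have lhs1 : (B * (1 + lam) * (Δ:ℝ) / ((1 - t) * lam)) * Real.log (1 + lam)
        ≤ (B * (1 + lam) * (Δ:ℝ) / ((1 - t) * lam)) * lam :=
      mul_le_mul_of_nonneg_left step1 hz0
    have step2 : (B * (1 + lam) * (Δ:ℝ) / ((1 - t) * lam)) * lam = 2*(L+1)/(2+ε) := by
      rw [hBdef, hlamdef, htdef]
      have hLne : L ≠ 0 := ne_of_gt hL0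
      have hΔne : (Δ:ℝ) ≠ 0 := ne_of_gt hΔ0
      have h1 : (1:ℝ) + ε ≠ 0 := ne_of_gt h1e
      have h2 : (2:ℝ) + ε ≠ 0 := ne_of_gt h2e
      have h3 : 1 - ε/(2*(1+ε)) = (2+ε)/(2*(1+ε)) := by
        field_simp
        ring
      rw [h3]
      field_simp
    have step4 : lam * (t/2) / B = (ε/4) * (Δ:ℝ) / L^2 := by
      rw [hBdef, hlamdef, ht2]
      field_simp
    have hq : (0:ℝ) < (ε/4) * (Δ:ℝ) / L^2 := by positivity
    have step5 : Real.log ((ε/4) * (Δ:ℝ) / L^2) = Real.log (ε/4) + L - 2*Real.log L := by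
      rw [Real.log_div (by positivity) (by positivity),
        Real.log_mul (by positivity) (by positivity), Real.log_pow]
      push_cast
      ring
    have step3 : Real.log (lam * (t/2) / B) ≤ Real.log (lam * (t - B) / B) := by
      apply Real.log_le_log (by rw [step4]; exact hq)
      gcongr
      linarith
    calc (B * (1 + lam) * (Δ:ℝ) / ((1 - t) * lam)) * Real.log (1 + lam)
        ≤ 2*(L+1)/(2+ε) := by rw [← step2]; exact lhs1
      _ ≤ L - 2*Real.log L + Real.log (ε/4) := hE3
      _ = Real.log ((ε/4) * (Δ:ℝ) / L^2) := by rw [step5]; ring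
      _ = Real.log (lam * (t/2) / B) := by rw [step4]
      _ ≤ Real.log (lam * (t - B) / B) := step3
  -- sum the per-vertex inequalities
  have pv : ∀ v : V, B * ShearerAux.Wsum G lam
      ≤ t * ShearerAux.Psum G lam v + ((1 - t) / (Δ:ℝ)) * ShearerAux.Dsum G lam v :=
    fun v => ShearerAux.per_vertex h3 v hlam hB hBt ht1 hΔ0 Hlog
  have sum_pv := Finset.sum_le_sum (fun v (_ : v ∈ Finset.univ) => pv v)
  rw [Finset.sum_const, Finset.sum_add_distrib, ← Finset.mul_sum, ← Finset.mul_sum,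
    ShearerAux.sum_P] at sum_pv
  have hD := ShearerAux.sum_D (G := G) hlam.le hdeg
  have hA0 : ((1-t)/(Δ:ℝ)) * (∑ v, ShearerAux.Dsum G lam v)
      ≤ ((1-t)/(Δ:ℝ)) * ((Δ:ℝ) * ShearerAux.Asum G lam) :=
    mul_le_mul_of_nonneg_left hD (by positivity)
  have hsimp : ((1-t)/(Δ:ℝ)) * ((Δ:ℝ) * ShearerAux.Asum G lam)
      = (1-t) * ShearerAux.Asum G lam := by
    field_simp
  have final : ((Fintype.card V : ℝ) * B) * ShearerAux.Wsum G lam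
      ≤ ShearerAux.Asum G lam := by
    rw [Finset.card_univ] at sum_pv
    have hcard : (Fintype.card V) • (B * ShearerAux.Wsum G lam)
        = (Fintype.card V : ℝ) * B * ShearerAux.Wsum G lam := by
      rw [nsmul_eq_mul]; ring
    rw [hcard] at sum_pv
    nlinarith [sum_pv, hA0, hsimp]
  obtain ⟨I, hI, hIcard⟩ := ShearerAux.exists_big hlam final
  refine ⟨I, fun u hu w hw => ((ShearerAux.mem_indS (G := G)).1 hI) u hu w hw, ?_⟩
  calc (Fintype.card V : ℝ) * Real.log Δ / ((1 + ε) * Δ)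
      = (Fintype.card V : ℝ) * B := by rw [hBdef, mul_div_assoc]
    _ ≤ I.card := hIcard
end
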